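/- arXiv:2302.00036 — 8 statements merged into one kernel-verified Lean document; each statement's English description precedes it below -/
import Mathlib

section
/- For any two policies π, π' and any state s ∈ S, the set Z = {γ ∈ [0,1) : v^π_{γ,s} = v^{π'}_{γ,s}} is either equal to the whole interval [0,1) or is a finite set. -/
open Matrix Polynomial

/-- The transition matrix induced by a policy `π`. -/
def policyMatrix {S A : Type*} [Fintype S] (P : S → A → S → ℝ) (π : S → A) :
    Matrix S S ℝ :=
  Matrix.of fun s s' => P s (π s) s'

/-- The reward vector induced by a policy `π`. -/
def policyReward {S A : Type*} (r : S → A → ℝ) (π : S → A) : S → ℝ :=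
  fun s => r s (π s)

/-- The discounted value function of a policy `π`: `v^π_γ = (I - γ P_π)⁻¹ r_π`. -/
noncomputable def valueFn {S A : Type*} [Fintype S] [DecidableEq S]
    (r : S → A → ℝ) (P : S → A → S → ℝ) (π : S → A) (γ : ℝ) : S → ℝ :=
  ((1 : Matrix S S ℝ) - γ • policyMatrix P π)⁻¹ *ᵥ policyReward r π

/-- For `γ ∈ [0,1)`, the matrix `I - γ P_π` is strictly row diagonally dominant,
hence has nonzero determinant. -/
lemma MDPaux.det_ne {S A : Type*} [Fintype S] [DecidableEq S]
    (P : S → A → S → ℝ) (hP0 : ∀ s a s', 0 ≤ P s a s') (hP1 : ∀ s a, ∑ s', P s a s' = 1)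
    (π : S → A) {γ : ℝ} (hγ : γ ∈ Set.Ico (0:ℝ) 1) :
    ((1 : Matrix S S ℝ) - γ • policyMatrix P π).det ≠ 0 := by
  obtain ⟨h0, h1⟩ := hγ
  apply det_ne_zero_of_sum_row_lt_diag
  intro k
  have hPk1 : P k (π k) k ≤ 1 := by
    rw [← hP1 k (π k)]
    exact Finset.single_le_sum (fun i _ => hP0 k (π k) i) (Finset.mem_univ k)
  have hdiag : ((1 : Matrix S S ℝ) - γ • policyMatrix P π) k k = 1 - γ * P k (π k) k := by
    simp [policyMatrix, Matrix.one_apply]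
  have hoff : ∀ j ∈ Finset.univ.erase k,
      ‖((1 : Matrix S S ℝ) - γ • policyMatrix P π) k j‖ = γ * P k (π k) j := by
    intro j hj
    have hjk : j ≠ k := Finset.ne_of_mem_erase hj
    simp only [Matrix.sub_apply, Matrix.one_apply_ne' hjk, Matrix.smul_apply, policyMatrix,
      Matrix.of_apply, smul_eq_mul, zero_sub, norm_neg, Real.norm_eq_abs]
    exact abs_of_nonneg (mul_nonneg h0 (hP0 k (π k) j))
  rw [Finset.sum_congr rfl hoff, hdiag]
  have hsum : ∑ j ∈ Finset.univ.erase k, γ * P k (π k) j = γ * (1 - P k (π k) k) := by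
    rw [← Finset.mul_sum, Finset.sum_erase_eq_sub (Finset.mem_univ k), hP1]
  rw [hsum]
  have hpos : 0 < 1 - γ * P k (π k) k := by nlinarith [hP0 k (π k) k]
  rw [Real.norm_eq_abs, abs_of_pos hpos]
  nlinarith [hP0 k (π k) k]

/-- For any two policies `π, π'` and any state `s`, the set
`Z = {γ ∈ [0,1) : v^π_{γ,s} = v^{π'}_{γ,s}}` is either the whole interval `[0,1)`
or a finite set. -/
theorem valueFn_eq_set_eq_Ico_or_finite {S A : Type*} [Fintype S] [DecidableEq S]
    [Nonempty S] [Fintype A] [Nonempty A]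
    (r : S → A → ℝ) (P : S → A → S → ℝ)
    (hP0 : ∀ s a s', 0 ≤ P s a s') (hP1 : ∀ s a, ∑ s', P s a s' = 1)
    (π π' : S → A) (s : S) :
    {γ : ℝ | γ ∈ Set.Ico (0 : ℝ) 1 ∧ valueFn r P π γ s = valueFn r P π' γ s}
        = Set.Ico (0 : ℝ) 1 ∨
      Set.Finite
        {γ : ℝ | γ ∈ Set.Ico (0 : ℝ) 1 ∧ valueFn r P π γ s = valueFn r P π' γ s} := by
  classical
  set M : (S → A) → Matrix S S ℝ[X] :=
    fun σ => (1 : Matrix S S ℝ[X]) - (X : ℝ[X]) • ((policyMatrix P σ).map C) with hM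
  set q : (S → A) → ℝ[X] := fun σ => (M σ).det with hqdef
  set u : (S → A) → ℝ[X] :=
    fun σ => ((M σ).adjugate *ᵥ fun i => C (policyReward r σ i)) s with hudef
  set p : ℝ[X] := q π' * u π - q π * u π' with hpdef
  have hmap : ∀ (σ : S → A) (γ : ℝ),
      (evalRingHom γ).mapMatrix (M σ) = (1 : Matrix S S ℝ) - γ • policyMatrix P σ := by
    intro σ γ
    ext i j
    by_cases hij : i = j <;>
      · simp [hM, RingHom.mapMatrix_apply, Matrix.map_apply, Matrix.one_apply, hij]
        ring
  have hq : ∀ (σ : S → A) (γ : ℝ),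
      (q σ).eval γ = ((1 : Matrix S S ℝ) - γ • policyMatrix P σ).det := by
    intro σ γ
    have := (evalRingHom γ).map_det (M σ)
    rw [hmap σ γ] at this
    simpa [hqdef] using this
  have hu : ∀ (σ : S → A) (γ : ℝ),
      (u σ).eval γ =
        (((1 : Matrix S S ℝ) - γ • policyMatrix P σ).adjugate *ᵥ policyReward r σ) s := by
    intro σ γ
    have hadj : ∀ i j, ((M σ).adjugate i j).eval γ =
        ((1 : Matrix S S ℝ) - γ • policyMatrix P σ).adjugate i j := by
      intro i j
      have h := (evalRingHom γ).map_adjugate (M σ)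
      rw [hmap σ γ] at h
      have := congrFun (congrFun (congrArg (fun m => (m : Matrix S S ℝ)) h) i) j
      simpa [RingHom.mapMatrix_apply, Matrix.map_apply] using this
    simp only [hudef, Matrix.mulVec, dotProduct, eval_finset_sum, eval_mul, eval_C, hadj]
  have hval : ∀ (σ : S → A) (γ : ℝ),
      valueFn r P σ γ s = (((1 : Matrix S S ℝ) - γ • policyMatrix P σ).det)⁻¹ *
        ((((1 : Matrix S S ℝ) - γ • policyMatrix P σ).adjugate) *ᵥ policyReward r σ) s := by
    intro σ γ
    rw [valueFn, Matrix.inv_def, Ring.inverse_eq_inv', Matrix.smul_mulVec]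
    simp
  have hiff : ∀ γ ∈ Set.Ico (0:ℝ) 1,
      (valueFn r P π γ s = valueFn r P π' γ s ↔ p.eval γ = 0) := by
    intro γ hγ
    have ha := MDPaux.det_ne P hP0 hP1 π hγ
    have ha' := MDPaux.det_ne P hP0 hP1 π' hγ
    rw [hval π γ, hval π' γ, hpdef]
    rw [eval_sub, eval_mul, eval_mul, hq, hq, hu, hu, sub_eq_zero]
    constructor
    · intro h
      field_simp at h
      linarith
    · intro h
      field_simp
      linarith
  by_cases hall : ∀ γ ∈ Set.Ico (0:ℝ) 1, valueFn r P π γ s = valueFn r P π' γ s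
  · left
    ext x
    exact ⟨fun h => h.1, fun h => ⟨h, hall x h⟩⟩
  · right
    push_neg at hall
    obtain ⟨γ0, hγ0, hne⟩ := hall
    have hp : p ≠ 0 := by
      intro h
      exact hne ((hiff γ0 hγ0).mpr (by rw [h]; simp))
    exact Set.Finite.subset (Polynomial.finite_setOf_isRoot hp)
      (fun γ hγ => (hiff γ hγ.1).mp hγ.2)
end

section
/- In any finite MDP there exists at least one Blackwell-optimal policy: there exist a policy π and γ₀ ∈ [0,1) such that for every γ ∈ [γ₀, 1), every policy π' and every state s ∈ S, one has v^π_{γ,s} ≥ v^{π'}_{γ,s}. -/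
open Matrix

open Polynomial

set_option linter.unusedSectionVars false

section BWAux
variable {S : Type*} [Fintype S] [DecidableEq S] [Nonempty S]

lemma BW.mulVec_one_sub_apply (M : Matrix S S ℝ) (γ : ℝ) (y : S → ℝ) (s : S) :
    (((1 : Matrix S S ℝ) - γ • M) *ᵥ y) s = y s - γ * ∑ s', M s s' * y s' := by
  rw [Matrix.sub_mulVec, Matrix.one_mulVec, Matrix.smul_mulVec]
  simp [Matrix.mulVec, dotProduct, Finset.mul_sum]

lemma BW.stoch_det_ne_zero (M : Matrix S S ℝ) (h0 : ∀ s s', 0 ≤ M s s')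
    (h1 : ∀ s, ∑ s', M s s' = 1) {γ : ℝ} (hγ0 : 0 ≤ γ) (hγ1 : γ < 1) :
    ((1 : Matrix S S ℝ) - γ • M).det ≠ 0 := by
  intro hdet
  obtain ⟨v, hvne, hv⟩ := (Matrix.exists_mulVec_eq_zero_iff).2 hdet
  obtain ⟨s, -, hs⟩ := Finset.exists_max_image Finset.univ (fun t => |v t|)
    Finset.univ_nonempty
  have hvs : v s = γ * ∑ s', M s s' * v s' := by
    have := congrFun hv s
    rw [BW.mulVec_one_sub_apply] at this
    simp only [Pi.zero_apply] at this
    linarith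
  have habs : |v s| ≤ γ * |v s| := by
    calc |v s| = γ * |∑ s', M s s' * v s'| := by
          rw [hvs, abs_mul, abs_of_nonneg hγ0]
      _ ≤ γ * ∑ s', M s s' * |v s| := by
          apply mul_le_mul_of_nonneg_left _ hγ0
          calc |∑ s', M s s' * v s'| ≤ ∑ s', |M s s' * v s'| :=
                Finset.abs_sum_le_sum_abs _ _
            _ ≤ ∑ s', M s s' * |v s| := by
                apply Finset.sum_le_sum
                intro t _
                rw [abs_mul, abs_of_nonneg (h0 s t)]
                exact mul_le_mul_of_nonneg_left (hs t (Finset.mem_univ t)) (h0 s t)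
      _ = γ * |v s| := by rw [← Finset.sum_mul, h1 s, one_mul]
  have hzs : |v s| = 0 := by nlinarith [abs_nonneg (v s)]
  apply hvne
  funext t
  have := hs t (Finset.mem_univ t)
  rw [hzs] at this
  simpa using abs_nonpos_iff.mp this

lemma BW.stoch_mulVec_nonneg (M : Matrix S S ℝ) (h0 : ∀ s s', 0 ≤ M s s')
    (h1 : ∀ s, ∑ s', M s s' = 1) {γ : ℝ} (hγ0 : 0 ≤ γ) (hγ1 : γ < 1) {y : S → ℝ}
    (h : ∀ s, 0 ≤ (((1 : Matrix S S ℝ) - γ • M) *ᵥ y) s) : ∀ s, 0 ≤ y s := by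
  obtain ⟨s₀, -, hs₀⟩ := Finset.exists_min_image Finset.univ y Finset.univ_nonempty
  have hkey : y s₀ - γ * ∑ s', M s₀ s' * y s' ≥ 0 := by
    have := h s₀; rw [BW.mulVec_one_sub_apply] at this; linarith
  have hsum : ∑ s', M s₀ s' * y s' ≥ y s₀ := by
    calc ∑ s', M s₀ s' * y s' ≥ ∑ s', M s₀ s' * y s₀ := by
          apply Finset.sum_le_sum
          intro t _
          exact mul_le_mul_of_nonneg_left (hs₀ t (Finset.mem_univ t)) (h0 s₀ t)
      _ = y s₀ := by rw [← Finset.sum_mul, h1 s₀, one_mul]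
  have h0' : 0 ≤ y s₀ := by nlinarith
  intro s
  exact le_trans h0' (hs₀ s (Finset.mem_univ s))

lemma BW.stoch_cancel (M : Matrix S S ℝ) (h0 : ∀ s s', 0 ≤ M s s')
    (h1 : ∀ s, ∑ s', M s s' = 1) {γ : ℝ} (hγ0 : 0 ≤ γ) (hγ1 : γ < 1) (c : S → ℝ) :
    ((1 : Matrix S S ℝ) - γ • M) *ᵥ (((1 : Matrix S S ℝ) - γ • M)⁻¹ *ᵥ c) = c := by
  rw [Matrix.mulVec_mulVec, Matrix.mul_nonsing_inv _
    (isUnit_iff_ne_zero.2 (BW.stoch_det_ne_zero M h0 h1 hγ0 hγ1)), Matrix.one_mulVec]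

variable {A : Type*} [Fintype A] [Nonempty A]
variable (r : S → A → ℝ) (P : S → A → S → ℝ)

/-- Bellman equation for a policy. -/
lemma BW.valueFn_bellman (hP0 : ∀ s a s', 0 ≤ P s a s') (hP1 : ∀ s a, ∑ s', P s a s' = 1)
    {γ : ℝ} (hγ0 : 0 ≤ γ) (hγ1 : γ < 1) (π : S → A) (s : S) :
    valueFn r P π γ s = r s (π s) + γ * ∑ s', P s (π s) s' * valueFn r P π γ s' := by
  have := congrFun (BW.stoch_cancel (policyMatrix P π) (fun s s' => hP0 s (π s) s')
    (fun s => hP1 s (π s)) hγ0 hγ1 (policyReward r π)) s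
  rw [BW.mulVec_one_sub_apply] at this
  simp only [policyReward] at this
  have : valueFn r P π γ s - γ * ∑ s', policyMatrix P π s s' * valueFn r P π γ s'
      = r s (π s) := this
  simp only [policyMatrix, Matrix.of_apply] at this
  linarith

/-- Existence of a discounted-optimal policy for a fixed discount factor. -/
lemma BW.exists_opt_policy (hP0 : ∀ s a s', 0 ≤ P s a s') (hP1 : ∀ s a, ∑ s', P s a s' = 1)
    {γ : ℝ} (hγ0 : 0 ≤ γ) (hγ1 : γ < 1) :
    ∃ π : S → A, ∀ (π' : S → A) (s : S), valueFn r P π' γ s ≤ valueFn r P π γ s := by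
  classical
  obtain ⟨π, -, hπ⟩ := Finset.exists_max_image Finset.univ
    (fun π : S → A => ∑ s, valueFn r P π γ s) Finset.univ_nonempty
  set v : S → ℝ := valueFn r P π γ with hv
  set Q : S → A → ℝ := fun s a => r s a + γ * ∑ s', P s a s' * v s' with hQ
  have hgreedy : ∀ s, ∃ a, ∀ a', Q s a' ≤ Q s a := by
    intro s
    obtain ⟨a, -, ha⟩ := Finset.exists_max_image Finset.univ (Q s) Finset.univ_nonempty
    exact ⟨a, fun a' => ha a' (Finset.mem_univ a')⟩
  choose π'' hπ'' using hgreedy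
  have himp : ∀ s, v s ≤ valueFn r P π'' γ s := by
    have := BW.stoch_mulVec_nonneg (policyMatrix P π'') (fun s s' => hP0 s (π'' s) s')
      (fun s => hP1 s (π'' s)) hγ0 hγ1 (y := fun s => valueFn r P π'' γ s - v s) ?_
    · intro s; linarith [this s]
    · intro s
      rw [BW.mulVec_one_sub_apply]
      have hb'' := BW.valueFn_bellman r P hP0 hP1 hγ0 hγ1 π'' s
      have hbπ := BW.valueFn_bellman r P hP0 hP1 hγ0 hγ1 π s
      have hq : Q s (π s) ≤ Q s (π'' s) := hπ'' s (π s)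
      simp only [hQ] at hq
      have hsplit : ∑ s', policyMatrix P π'' s s' * (valueFn r P π'' γ s' - v s')
          = (∑ s', P s (π'' s) s' * valueFn r P π'' γ s') - ∑ s', P s (π'' s) s' * v s' := by
        rw [← Finset.sum_sub_distrib]
        apply Finset.sum_congr rfl
        intro t _
        simp only [policyMatrix, Matrix.of_apply]
        ring
      rw [hsplit]
      have hvs : v s = valueFn r P π γ s := rfl
      nlinarith [hbπ, hb'', hq]
  have hsum : ∑ s, valueFn r P π'' γ s ≤ ∑ s, v s := hπ π'' (Finset.mem_univ π'')
  have hsum' : ∑ s, v s ≤ ∑ s, valueFn r P π'' γ s :=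
    Finset.sum_le_sum fun s _ => himp s
  have heq : ∀ s, v s = valueFn r P π'' γ s :=
    fun s => ((Finset.sum_eq_sum_iff_of_le fun s _ => himp s).1
      (le_antisymm hsum' hsum)) s (Finset.mem_univ s)
  have hbell : ∀ s a, Q s a ≤ v s := by
    intro s a
    have hb'' := BW.valueFn_bellman r P hP0 hP1 hγ0 hγ1 π'' s
    have hveq : v s = Q s (π'' s) := by
      simp only [hQ]
      rw [heq s, hb'']
      congr 2
      exact Finset.sum_congr rfl fun t _ => by rw [heq t]
    calc Q s a ≤ Q s (π'' s) := hπ'' s a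
      _ = v s := hveq.symm
  refine ⟨π, fun π' s => ?_⟩
  have := BW.stoch_mulVec_nonneg (policyMatrix P π') (fun s s' => hP0 s (π' s) s')
    (fun s => hP1 s (π' s)) hγ0 hγ1 (y := fun s => v s - valueFn r P π' γ s) ?_
  · linarith [this s]
  · intro t
    rw [BW.mulVec_one_sub_apply]
    have hbπ' := BW.valueFn_bellman r P hP0 hP1 hγ0 hγ1 π' t
    have hq := hbell t (π' t)
    simp only [hQ] at hq
    have hsplit : ∑ s', policyMatrix P π' t s' * (v s' - valueFn r P π' γ s')
        = (∑ s', P t (π' t) s' * v s') - ∑ s', P t (π' t) s' * valueFn r P π' γ s' := by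
      rw [← Finset.sum_sub_distrib]
      apply Finset.sum_congr rfl
      intro u _
      simp only [policyMatrix, Matrix.of_apply]
      ring
    rw [hsplit]
    nlinarith [hbπ', hq]

end BWAux

section PolyLemmas
variable {S : Type*} [Fintype S] [DecidableEq S]

/-- The matrix `I - X • M` over `ℝ[X]`. -/
noncomputable def BW.pMat (M : Matrix S S ℝ) : Matrix S S (Polynomial ℝ) :=
  1 - (X : ℝ[X]) • M.map (fun x => C x)

noncomputable def BW.Dp (M : Matrix S S ℝ) : ℝ[X] := (BW.pMat M).det

noncomputable def BW.Np (M : Matrix S S ℝ) (c : S → ℝ) (s : S) : ℝ[X] :=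
  ∑ t, (BW.pMat M).adjugate s t * C (c t)

lemma BW.pMat_map (M : Matrix S S ℝ) (γ : ℝ) :
    (BW.pMat M).map (eval γ) = (1 : Matrix S S ℝ) - γ • M := by
  ext s t
  rw [Matrix.map_apply, BW.pMat, Matrix.sub_apply, Matrix.smul_apply, Matrix.sub_apply,
    Matrix.smul_apply, Matrix.map_apply, eval_sub, smul_eq_mul, smul_eq_mul, eval_mul,
    eval_X, eval_C]
  congr 1
  by_cases h : s = t <;> simp [Matrix.one_apply, h]

lemma BW.Dp_eval (M : Matrix S S ℝ) (γ : ℝ) :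
    (BW.Dp M).eval γ = ((1 : Matrix S S ℝ) - γ • M).det := by
  rw [← BW.pMat_map M γ, BW.Dp, ← coe_evalRingHom]
  exact RingHom.map_det _ _

lemma BW.pMat_mapMatrix (M : Matrix S S ℝ) (γ : ℝ) :
    (evalRingHom γ).mapMatrix (BW.pMat M) = (1 : Matrix S S ℝ) - γ • M := by
  rw [RingHom.mapMatrix_apply, coe_evalRingHom]
  exact BW.pMat_map M γ

lemma BW.Np_eval (M : Matrix S S ℝ) (c : S → ℝ) (s : S) (γ : ℝ) :
    (BW.Np M c s).eval γ = ∑ t, ((1 : Matrix S S ℝ) - γ • M).adjugate s t * c t := by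
  rw [BW.Np, eval_finset_sum]
  refine Finset.sum_congr rfl fun t _ => ?_
  rw [eval_mul, eval_C]
  congr 1
  calc eval γ ((BW.pMat M).adjugate s t)
      = ((evalRingHom γ).mapMatrix (BW.pMat M).adjugate) s t := rfl
    _ = ((evalRingHom γ).mapMatrix (BW.pMat M)).adjugate s t := by
        rw [RingHom.map_adjugate]
    _ = ((1 : Matrix S S ℝ) - γ • M).adjugate s t := by rw [BW.pMat_mapMatrix]

lemma BW.Dp_eval_zero (M : Matrix S S ℝ) : (BW.Dp M).eval 0 = 1 := by
  rw [BW.Dp_eval]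
  simp

/-- root bound for a polynomial: strictly between it and 1 there are no roots. -/
noncomputable def BW.rbound (q : ℝ[X]) : ℝ :=
  (insert (0:ℝ) (q.roots.toFinset.filter (fun x => x < 1))).max' (Finset.insert_nonempty _ _)

lemma BW.rbound_nonneg (q : ℝ[X]) : 0 ≤ BW.rbound q :=
  Finset.le_max' _ _ (Finset.mem_insert_self _ _)

lemma BW.rbound_lt_one (q : ℝ[X]) : BW.rbound q < 1 := by
  have h := Finset.max'_mem (insert (0:ℝ) (q.roots.toFinset.filter (fun x => x < 1)))
    (Finset.insert_nonempty _ _)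
  rcases Finset.mem_insert.1 h with h' | h'
  · rw [BW.rbound, h']; norm_num
  · exact (Finset.mem_filter.1 h').2

lemma BW.eval_ne_zero_of_rbound {q : ℝ[X]} (hq : q ≠ 0) {x : ℝ}
    (h1 : BW.rbound q < x) (h2 : x < 1) : q.eval x ≠ 0 := by
  intro h
  have hx : x ∈ q.roots := (mem_roots hq).2 h
  have hmem : x ∈ insert (0:ℝ) (q.roots.toFinset.filter (fun y => y < 1)) :=
    Finset.mem_insert_of_mem (Finset.mem_filter.2 ⟨Multiset.mem_toFinset.2 hx, h2⟩)
  have := Finset.le_max' _ x hmem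
  rw [← BW.rbound] at this
  linarith

lemma BW.sign_persist {q : ℝ[X]} {a b : ℝ} (ha0 : BW.rbound q < a) (ha1 : a < 1)
    (hb0 : BW.rbound q < b) (hb1 : b < 1) (h : 0 ≤ q.eval a) : 0 ≤ q.eval b := by
  rcases eq_or_ne q 0 with rfl | hq
  · simp
  by_contra hb
  push_neg at hb
  have ha' : 0 < q.eval a := lt_of_le_of_ne h (Ne.symm (BW.eval_ne_zero_of_rbound hq ha0 ha1))
  rcases le_total a b with hab | hab
  · obtain ⟨x, hx, hfx⟩ := intermediate_value_Icc' hab q.continuous.continuousOn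
      (show (0:ℝ) ∈ Set.Icc (q.eval b) (q.eval a) from ⟨le_of_lt hb, le_of_lt ha'⟩)
    exact BW.eval_ne_zero_of_rbound hq (lt_of_lt_of_le ha0 hx.1) (lt_of_le_of_lt hx.2 hb1) hfx
  · obtain ⟨x, hx, hfx⟩ := intermediate_value_Icc hab q.continuous.continuousOn
      (show (0:ℝ) ∈ Set.Icc (q.eval b) (q.eval a) from ⟨le_of_lt hb, le_of_lt ha'⟩)
    exact BW.eval_ne_zero_of_rbound hq (lt_of_lt_of_le hb0 hx.1) (lt_of_le_of_lt hx.2 ha1) hfx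

variable [Nonempty S]

lemma BW.Dp_pos (M : Matrix S S ℝ) (h0 : ∀ s s', 0 ≤ M s s')
    (h1 : ∀ s, ∑ s', M s s' = 1) {γ : ℝ} (hγ0 : 0 ≤ γ) (hγ1 : γ < 1) :
    0 < (BW.Dp M).eval γ := by
  by_contra h
  push_neg at h
  have hne : (BW.Dp M).eval γ ≠ 0 := by
    rw [BW.Dp_eval]
    exact BW.stoch_det_ne_zero M h0 h1 hγ0 hγ1
  have hlt : (BW.Dp M).eval γ < 0 := lt_of_le_of_ne h hne
  obtain ⟨x, hx, hfx⟩ := intermediate_value_Icc' hγ0 (BW.Dp M).continuous.continuousOn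
    (show (0:ℝ) ∈ Set.Icc ((BW.Dp M).eval γ) ((BW.Dp M).eval 0) from
      ⟨le_of_lt hlt, by rw [BW.Dp_eval_zero]; norm_num⟩)
  have : ((1 : Matrix S S ℝ) - x • M).det = 0 := by rw [← BW.Dp_eval]; exact hfx
  exact BW.stoch_det_ne_zero M h0 h1 hx.1 (lt_of_le_of_lt hx.2 hγ1) this

/-- value function as a rational function of the discount factor. -/
lemma BW.valueFn_eq {A : Type*} [Fintype A]
    (r : S → A → ℝ) (P : S → A → S → ℝ) (π : S → A) (γ : ℝ) (s : S) :
    valueFn r P π γ s = (BW.Np (policyMatrix P π) (policyReward r π) s).eval γ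
      / (BW.Dp (policyMatrix P π)).eval γ := by
  rw [BW.Np_eval, BW.Dp_eval]
  rw [valueFn, Matrix.inv_def, Matrix.smul_mulVec]
  simp only [Pi.smul_apply, smul_eq_mul, Ring.inverse_eq_inv]
  rw [div_eq_inv_mul]
  congr 1

end PolyLemmas

/-- In any finite MDP there exists a Blackwell-optimal policy: a policy `π` and a
`γ₀ ∈ [0,1)` such that `π` is `γ`-discounted optimal for every `γ ∈ [γ₀, 1)`. -/
theorem exists_blackwell_optimal_policy {S A : Type*} [Fintype S] [DecidableEq S]
    [Nonempty S] [Fintype A] [Nonempty A]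
    (r : S → A → ℝ) (P : S → A → S → ℝ)
    (hP0 : ∀ s a s', 0 ≤ P s a s') (hP1 : ∀ s a, ∑ s', P s a s' = 1) :
    ∃ (π : S → A) (γ₀ : ℝ), 0 ≤ γ₀ ∧ γ₀ < 1 ∧
      ∀ γ : ℝ, γ₀ ≤ γ → γ < 1 →
        ∀ (π' : S → A) (s : S), valueFn r P π' γ s ≤ valueFn r P π γ s := by
  classical
  -- the sign polynomial of the value difference of two policies at a state
  set q : (S → A) → (S → A) → S → ℝ[X] := fun π π' s =>
    BW.Np (policyMatrix P π) (policyReward r π) s * BW.Dp (policyMatrix P π') -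
    BW.Np (policyMatrix P π') (policyReward r π') s * BW.Dp (policyMatrix P π) with hqdef
  set c0 : ℝ := Finset.univ.sup' Finset.univ_nonempty
    (fun t : ((S → A) × (S → A)) × S => BW.rbound (q t.1.1 t.1.2 t.2)) with hc0def
  have hc00 : 0 ≤ c0 := le_trans (BW.rbound_nonneg _)
    (Finset.le_sup' (fun t : ((S → A) × (S → A)) × S => BW.rbound (q t.1.1 t.1.2 t.2)) (Finset.mem_univ (Classical.arbitrary _)))
  have hc01 : c0 < 1 := (Finset.sup'_lt_iff _).2 fun t _ => BW.rbound_lt_one _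
  set γs : ℝ := (c0 + 1) / 2 with hγsdef
  have hγs0 : c0 < γs := by rw [hγsdef]; linarith
  have hγs1 : γs < 1 := by rw [hγsdef]; linarith
  have hγsnn : 0 ≤ γs := le_trans hc00 (le_of_lt hγs0)
  obtain ⟨π, hopt⟩ := BW.exists_opt_policy r P hP0 hP1 hγsnn hγs1
  refine ⟨π, γs, hγsnn, hγs1, ?_⟩
  intro γ hγl hγu π' s
  have hγnn : 0 ≤ γ := le_trans hγsnn hγl
  -- positivity of the determinants
  have hDπ : ∀ δ : ℝ, 0 ≤ δ → δ < 1 → ∀ τ : S → A, 0 < (BW.Dp (policyMatrix P τ)).eval δ :=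
    fun δ hδ0 hδ1 τ => BW.Dp_pos _ (fun s s' => hP0 s (τ s) s') (fun s => hP1 s (τ s)) hδ0 hδ1
  -- key identity
  have key : ∀ δ : ℝ, 0 ≤ δ → δ < 1 →
      (q π π' s).eval δ = (valueFn r P π δ s - valueFn r P π' δ s) *
        ((BW.Dp (policyMatrix P π)).eval δ * (BW.Dp (policyMatrix P π')).eval δ) := by
    intro δ hδ0 hδ1
    have h1 := (hDπ δ hδ0 hδ1 π).ne'
    have h2 := (hDπ δ hδ0 hδ1 π').ne'
    rw [hqdef]
    simp only [eval_sub, eval_mul]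
    rw [BW.valueFn_eq r P π δ s, BW.valueFn_eq r P π' δ s]
    field_simp
  -- nonnegativity at γs
  have hqγs : 0 ≤ (q π π' s).eval γs := by
    rw [key γs hγsnn hγs1]
    exact mul_nonneg (sub_nonneg.2 (hopt π' s))
      (mul_nonneg (hDπ γs hγsnn hγs1 π).le (hDπ γs hγsnn hγs1 π').le)
  -- rbound of this q is at most c0
  have hb : BW.rbound (q π π' s) ≤ c0 :=
    Finset.le_sup' (fun t : ((S → A) × (S → A)) × S => BW.rbound (q t.1.1 t.1.2 t.2))
      (Finset.mem_univ ((π, π'), s))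
  have hqγ : 0 ≤ (q π π' s).eval γ :=
    BW.sign_persist (lt_of_le_of_lt hb hγs0) hγs1
      (lt_of_le_of_lt hb (lt_of_lt_of_le hγs0 hγl)) hγu hqγs
  -- conclude
  have hkγ := key γ hγnn hγu
  have hpos : 0 < (BW.Dp (policyMatrix P π)).eval γ * (BW.Dp (policyMatrix P π')).eval γ :=
    mul_pos (hDπ γ hγnn hγu π) (hDπ γ hγnn hγu π')
  nlinarith [hqγ, hkγ, hpos]
end

section
/- In any finite MDP the Blackwell discount factor exists: there exists γ̄ ∈ [0,1) such that for every γ ∈ (γ̄, 1) and every policy π, π is γ-discounted optimal if and only if π is Blackwell-optimal. -/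
open Matrix

/-- `π` is `γ`-discounted optimal. -/
def DiscountedOptimal {S A : Type*} [Fintype S] [DecidableEq S]
    (r : S → A → ℝ) (P : S → A → S → ℝ) (γ : ℝ) (π : S → A) : Prop :=
  ∀ (π' : S → A) (s : S), valueFn r P π' γ s ≤ valueFn r P π γ s

/-- `π` is Blackwell-optimal: it is `γ'`-discounted optimal for all `γ'` in some `[γ₀, 1)`. -/
def BlackwellOptimal {S A : Type*} [Fintype S] [DecidableEq S]
    (r : S → A → ℝ) (P : S → A → S → ℝ) (π : S → A) : Prop :=
  ∃ γ₀ : ℝ, 0 ≤ γ₀ ∧ γ₀ < 1 ∧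
    ∀ γ' : ℝ, γ₀ ≤ γ' → γ' < 1 → DiscountedOptimal r P γ' π

namespace BW
open Polynomial

variable {S A : Type*} [Fintype S] [DecidableEq S]

noncomputable def Npoly (P : S → A → S → ℝ) (π : S → A) : Matrix S S ℝ[X] :=
  1 - (X : ℝ[X]) • (policyMatrix P π).map Polynomial.C

lemma Npoly_map (P : S → A → S → ℝ) (π : S → A) (γ : ℝ) :
    (Npoly P π).map (evalRingHom γ) = 1 - γ • policyMatrix P π := by
  ext s s'
  simp [Npoly, Matrix.one_apply, Matrix.sub_apply, apply_ite (eval γ)]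
  ring

noncomputable def dpoly (P : S → A → S → ℝ) (π : S → A) : ℝ[X] := (Npoly P π).det

noncomputable def apoly (r : S → A → ℝ) (P : S → A → S → ℝ) (π : S → A) : S → ℝ[X] :=
  (Npoly P π).adjugate *ᵥ fun s => Polynomial.C (r s (π s))

lemma det_ne_zero (P : S → A → S → ℝ) (hP0 : ∀ s a s', 0 ≤ P s a s')
    (hP1 : ∀ s a, ∑ s', P s a s' = 1) (π : S → A) {γ : ℝ} (h0 : 0 ≤ γ) (h1 : γ < 1)
    [Nonempty S] :
    ((1 : Matrix S S ℝ) - γ • policyMatrix P π).det ≠ 0 := by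
  intro hdet
  obtain ⟨v, hv, hMv⟩ := Matrix.exists_mulVec_eq_zero_iff.mpr hdet
  apply hv
  obtain ⟨s₀, -, hs₀⟩ := Finset.exists_max_image Finset.univ (fun s => |v s|)
    ⟨Classical.arbitrary S, Finset.mem_univ _⟩
  have key : v s₀ = γ * ∑ s', P s₀ (π s₀) s' * v s' := by
    have h := congrFun hMv s₀
    simp only [Matrix.mulVec, dotProduct, Matrix.sub_apply, Matrix.one_apply,
      Matrix.smul_apply, policyMatrix, Matrix.of_apply, smul_eq_mul, sub_mul,
      Finset.sum_sub_distrib, Pi.zero_apply] at h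
    have : ∑ s', (if s₀ = s' then (1:ℝ) else 0) * v s' = v s₀ := by simp
    rw [this] at h
    rw [Finset.mul_sum]
    have : ∀ s', γ * (P s₀ (π s₀) s' * v s') = γ * P s₀ (π s₀) s' * v s' := fun s' => (mul_assoc _ _ _).symm
    simp_rw [this]
    linarith [h]
  have hbound : |v s₀| ≤ γ * |v s₀| := by
    calc |v s₀| = γ * |∑ s', P s₀ (π s₀) s' * v s'| := by
          rw [key, abs_mul, abs_of_nonneg h0]
      _ ≤ γ * ∑ s', |P s₀ (π s₀) s' * v s'| := by
          gcongr
          exact Finset.abs_sum_le_sum_abs _ _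
      _ ≤ γ * ∑ s', P s₀ (π s₀) s' * |v s₀| := by
          gcongr with s' _
          rw [abs_mul, abs_of_nonneg (hP0 _ _ _)]
          exact mul_le_mul_of_nonneg_left (hs₀ s' (Finset.mem_univ _)) (hP0 _ _ _)
      _ = γ * |v s₀| := by rw [← Finset.sum_mul, hP1]; ring
  have hzero : |v s₀| = 0 := by nlinarith [abs_nonneg (v s₀)]
  funext s
  have := hs₀ s (Finset.mem_univ _)
  have : |v s| ≤ 0 := hzero ▸ this
  simpa using le_antisymm this (abs_nonneg _)


lemma dpoly_eval (P : S → A → S → ℝ) (π : S → A) (γ : ℝ) :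
    (dpoly P π).eval γ = ((1 : Matrix S S ℝ) - γ • policyMatrix P π).det := by
  rw [← Npoly_map P π γ, dpoly]
  exact (RingHom.map_det (evalRingHom γ) _)

lemma apoly_eval (r : S → A → ℝ) (P : S → A → S → ℝ) (π : S → A) (γ : ℝ) (s : S) :
    (apoly r P π s).eval γ =
      (((1 : Matrix S S ℝ) - γ • policyMatrix P π).adjugate *ᵥ policyReward r π) s := by
  rw [← Npoly_map P π γ]
  have hadj : ((Npoly P π).map (evalRingHom γ)).adjugate
      = (Npoly P π).adjugate.map (evalRingHom γ) :=
    ((evalRingHom γ).map_adjugate (Npoly P π)).symm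
  rw [hadj]
  simp only [apoly, Matrix.mulVec, dotProduct, Matrix.map_apply, Matrix.of_apply,
    policyReward, eval_mul, eval_C, Polynomial.eval_finset_sum, coe_evalRingHom]

lemma dpoly_pos (P : S → A → S → ℝ) (hP0 : ∀ s a s', 0 ≤ P s a s')
    (hP1 : ∀ s a, ∑ s', P s a s' = 1) (π : S → A) {γ : ℝ} (h0 : 0 ≤ γ) (h1 : γ < 1)
    [Nonempty S] : 0 < (dpoly P π).eval γ := by
  rcases lt_trichotomy ((dpoly P π).eval γ) 0 with hneg | hz | hpos
  · -- IVT: eval at 0 is det 1 = 1 > 0, so there would be a root in [0, γ]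
    exfalso
    have h00 : (dpoly P π).eval 0 = 1 := by
      rw [dpoly_eval]; simp
    obtain ⟨c, hc, hc0⟩ := intermediate_value_Icc' h0
      ((dpoly P π).continuous_aeval.continuousOn) (by rw [h00]; constructor <;> linarith : (0:ℝ) ∈ Set.Icc ((dpoly P π).eval γ) ((dpoly P π).eval 0))
    have : (dpoly P π).eval c ≠ 0 := by
      rw [dpoly_eval]
      exact det_ne_zero P hP0 hP1 π hc.1 (lt_of_le_of_lt hc.2 h1)
    exact this hc0
  · exfalso
    have : (dpoly P π).eval γ ≠ 0 := by
      rw [dpoly_eval]; exact det_ne_zero P hP0 hP1 π h0 h1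
    exact this hz
  · exact hpos

lemma valueFn_eq_s4 (r : S → A → ℝ) (P : S → A → S → ℝ) (hP0 : ∀ s a s', 0 ≤ P s a s')
    (hP1 : ∀ s a, ∑ s', P s a s' = 1) (π : S → A) {γ : ℝ} (h0 : 0 ≤ γ) (h1 : γ < 1)
    [Nonempty S] (s : S) :
    valueFn r P π γ s = (apoly r P π s).eval γ / (dpoly P π).eval γ := by
  have hd : ((1 : Matrix S S ℝ) - γ • policyMatrix P π).det ≠ 0 :=
    det_ne_zero P hP0 hP1 π h0 h1
  rw [valueFn, Matrix.inv_def, Ring.inverse_eq_inv, Matrix.smul_mulVec,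
    apoly_eval, dpoly_eval]
  simp [div_eq_inv_mul]

noncomputable def qpoly (r : S → A → ℝ) (P : S → A → S → ℝ) (π π' : S → A) (s : S) : ℝ[X] :=
  apoly r P π s * dpoly P π' - apoly r P π' s * dpoly P π

lemma qpoly_sign (r : S → A → ℝ) (P : S → A → S → ℝ) (hP0 : ∀ s a s', 0 ≤ P s a s')
    (hP1 : ∀ s a, ∑ s', P s a s' = 1) (π π' : S → A) {γ : ℝ} (h0 : 0 ≤ γ) (h1 : γ < 1)
    [Nonempty S] (s : S) :
    valueFn r P π' γ s ≤ valueFn r P π γ s ↔ 0 ≤ (qpoly r P π π' s).eval γ := by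
  have hd := dpoly_pos P hP0 hP1 π h0 h1
  have hd' := dpoly_pos P hP0 hP1 π' h0 h1
  rw [valueFn_eq_s4 r P hP0 hP1 π h0 h1 s, valueFn_eq_s4 r P hP0 hP1 π' h0 h1 s,
    div_le_div_iff₀ hd' hd, qpoly]
  simp only [eval_sub, eval_mul]
  constructor <;> intro h <;> linarith

lemma sign_transfer {p : ℝ[X]} {γbar : ℝ}
    (hroots : ∀ x, γbar < x → x < 1 → p.eval x = 0 → p = 0)
    {γ₁ γ₂ : ℝ} (h₁l : γbar < γ₁) (h₁r : γ₁ < 1) (h₂l : γbar < γ₂) (h₂r : γ₂ < 1)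
    (h : 0 ≤ p.eval γ₁) : 0 ≤ p.eval γ₂ := by
  by_cases hp : p = 0
  · simp [hp]
  by_contra hneg
  push_neg at hneg
  have h1pos : 0 < p.eval γ₁ := by
    rcases h.lt_or_eq with h' | h'
    · exact h'
    · exact absurd (hroots γ₁ h₁l h₁r h'.symm) hp
  have hc : (0 : ℝ) ∈ Set.uIcc (p.eval γ₂) (p.eval γ₁) :=
    Set.mem_uIcc.mpr (Or.inl ⟨le_of_lt hneg, le_of_lt h1pos⟩)
  obtain ⟨c, hcmem, hc0⟩ := intermediate_value_uIcc
    (p.continuous_aeval.continuousOn (s := Set.uIcc γ₂ γ₁)) hc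
  have hcl : γbar < c := by
    rcases Set.mem_uIcc.mp hcmem with h | h
    · exact lt_of_lt_of_le h₂l h.1
    · exact lt_of_lt_of_le h₁l h.1
  have hcr : c < 1 := by
    rcases Set.mem_uIcc.mp hcmem with h | h
    · exact lt_of_le_of_lt h.2 h₁r
    · exact lt_of_le_of_lt h.2 h₂r
  exact hp (hroots c hcl hcr hc0)

end BW

open BW Polynomial in
/-- In any finite MDP the Blackwell discount factor exists: there is `γ̄ ∈ [0,1)` such that
for every `γ ∈ (γ̄, 1)`, a policy is `γ`-discounted optimal iff it is Blackwell-optimal. -/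
theorem exists_blackwell_discount_factor {S A : Type*} [Fintype S] [DecidableEq S]
    [Nonempty S] [Fintype A] [Nonempty A]
    (r : S → A → ℝ) (P : S → A → S → ℝ)
    (hP0 : ∀ s a s', 0 ≤ P s a s') (hP1 : ∀ s a, ∑ s', P s a s' = 1) :
    ∃ γbar : ℝ, 0 ≤ γbar ∧ γbar < 1 ∧
      ∀ γ : ℝ, γbar < γ → γ < 1 →
        ∀ π : S → A, DiscountedOptimal r P γ π ↔ BlackwellOptimal r P π := by
  classical
  set q : (S → A) × (S → A) × S → ℝ[X] := fun i => qpoly r P i.1 i.2.1 i.2.2 with hq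
  set T : Finset ℝ := Finset.univ.biUnion (fun i => (q i).roots.toFinset) with hT
  set T' : Finset ℝ := insert (0 : ℝ) (T.filter (fun x => x < 1)) with hT'
  have hne : T'.Nonempty := ⟨0, Finset.mem_insert_self _ _⟩
  set γbar : ℝ := T'.max' hne with hγbar
  have hγ0 : 0 ≤ γbar := Finset.le_max' _ _ (Finset.mem_insert_self _ _)
  have hγ1 : γbar < 1 := by
    rw [hγbar, Finset.max'_lt_iff]
    intro x hx
    rcases Finset.mem_insert.mp hx with h | h
    · rw [h]; norm_num
    · exact (Finset.mem_filter.mp h).2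
  have hroots : ∀ i, ∀ x, γbar < x → x < 1 → (q i).eval x = 0 → q i = 0 := by
    intro i x hx1 hx2 hx0
    by_contra hqi
    have hxT : x ∈ T := Finset.mem_biUnion.mpr ⟨i, Finset.mem_univ _,
      (Multiset.mem_toFinset).mpr ((Polynomial.mem_roots hqi).mpr hx0)⟩
    have : x ∈ T' := Finset.mem_insert.mpr (Or.inr (Finset.mem_filter.mpr ⟨hxT, hx2⟩))
    exact absurd (Finset.le_max' _ _ this) (not_le.mpr hx1)
  -- transfer of optimality within (γbar, 1)
  have htrans : ∀ γ₁ γ₂ : ℝ, γbar < γ₁ → γ₁ < 1 → γbar < γ₂ → γ₂ < 1 →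
      ∀ π : S → A, DiscountedOptimal r P γ₁ π → DiscountedOptimal r P γ₂ π := by
    intro γ₁ γ₂ h1l h1r h2l h2r π hopt π' s
    have h10 : 0 ≤ γ₁ := le_trans hγ0 (le_of_lt h1l)
    have h20 : 0 ≤ γ₂ := le_trans hγ0 (le_of_lt h2l)
    rw [qpoly_sign r P hP0 hP1 π π' h20 h2r s]
    exact sign_transfer (hroots (π, π', s)) h1l h1r h2l h2r
      ((qpoly_sign r P hP0 hP1 π π' h10 h1r s).mp (hopt π' s))
  refine ⟨γbar, hγ0, hγ1, fun γ hγl hγr π => ⟨fun hopt => ?_, fun hBW => ?_⟩⟩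
  · exact ⟨γ, le_trans hγ0 (le_of_lt hγl), hγr,
      fun γ' hγ'l hγ'r => htrans γ γ' hγl hγr (lt_of_lt_of_le hγl hγ'l) hγ'r π hopt⟩
  · obtain ⟨γ₀, h₀0, h₀1, hopt⟩ := hBW
    set γ'' : ℝ := max γ₀ ((γbar + 1) / 2) with hγ''
    have hg1 : γ'' < 1 := max_lt h₀1 (by linarith)
    have hgl : γbar < γ'' := lt_of_lt_of_le (by linarith : γbar < (γbar + 1) / 2)
      (le_max_right _ _)
    exact htrans γ'' γ hgl hg1 hγl hγr π (hopt γ'' (le_max_left _ _) hg1)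
end

section
/- Define f(γ) = 6γ − 8γ² and g(γ) = (8/3)γ − (16/9)γ². Then: (i) for every γ ∈ [0, 1/4], f(γ) ≤ 1 and g(γ) ≤ 1; (ii) for every γ ∈ (1/4, 1/2), f(γ) > 1; (iii) for every γ ∈ [0,1], g(γ) ≤ 1, with g(γ) = 1 if and only if γ = 3/4; (iv) f(3/4) < 1; and (v) for every γ ∈ (1/2, 1), f(γ) < 1 and (for γ ≠ 3/4) g(γ) < 1. (In the MDP of Example 3.1, 1, f(γ), g(γ) are the value functions at state 0 of actions a₁, a₂, a₃; hence a₁ is Blackwell-optimal with γ(a₁) = 1/2, a₁ is γ₁-discounted optimal for γ₁ ∈ [0,1/4] < γ(a₁), and a₃ is γ₂-discounted optimal for γ₂ = 3/4 > γ(a₁) but not Blackwell-optimal, proving Proposition 3.3.) -/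
/-- Value function of action `a₂` in Example 3.1: `f γ = 6γ - 8γ²`. -/
noncomputable def fEx (γ : ℝ) : ℝ := 6 * γ - 8 * γ ^ 2

/-- Value function of action `a₃` in Example 3.1: `g γ = (8/3)γ - (16/9)γ²`. -/
noncomputable def gEx (γ : ℝ) : ℝ := (8 / 3) * γ - (16 / 9) * γ ^ 2

/-- Properties of the value functions of Example 3.1, proving Proposition 3.3:
(i) on `[0, 1/4]`, `f ≤ 1` and `g ≤ 1`; (ii) on `(1/4, 1/2)`, `f > 1`;
(iii) on `[0,1]`, `g ≤ 1` with equality iff `γ = 3/4`; (iv) `f(3/4) < 1`;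
(v) on `(1/2, 1)`, `f < 1`, and `g < 1` away from `γ = 3/4`. -/
theorem example_counter_example_0 :
    (∀ γ : ℝ, 0 ≤ γ → γ ≤ 1 / 4 → fEx γ ≤ 1 ∧ gEx γ ≤ 1) ∧
    (∀ γ : ℝ, 1 / 4 < γ → γ < 1 / 2 → 1 < fEx γ) ∧
    (∀ γ : ℝ, 0 ≤ γ → γ ≤ 1 → gEx γ ≤ 1 ∧ (gEx γ = 1 ↔ γ = 3 / 4)) ∧
    fEx (3 / 4) < 1 ∧
    (∀ γ : ℝ, 1 / 2 < γ → γ < 1 → fEx γ < 1 ∧ (γ ≠ 3 / 4 → gEx γ < 1)) := by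
  refine ⟨?_, ?_, ?_, ?_, ?_⟩
  · intro γ h0 h1
    simp only [fEx, gEx]
    constructor <;> nlinarith [sq_nonneg (γ - 1/4), sq_nonneg (γ - 3/4)]
  · intro γ h0 h1
    unfold fEx
    nlinarith [mul_pos (sub_pos.2 h0) (sub_pos.2 h1)]
  · intro γ h0 h1
    constructor
    · unfold gEx; nlinarith [sq_nonneg (γ - 3/4)]
    · constructor
      · intro h
        unfold gEx at h
        have : (γ - 3/4)^2 = 0 := by nlinarith
        have := pow_eq_zero_iff (n := 2) (by norm_num) |>.1 this
        linarith
      · intro h; subst h; unfold gEx; norm_num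
  · unfold fEx; norm_num
  · intro γ h0 h1
    constructor
    · unfold fEx; nlinarith [sq_nonneg (γ - 1/2)]
    · intro hne
      unfold gEx
      have hne' : γ - 3/4 ≠ 0 := sub_ne_zero.2 hne
      have : (γ - 3/4)^2 > 0 := by positivity
      nlinarith
end

section
/- Let n ≥ 1 and m ≥ 1 be integers and let P be an n × n row-stochastic real matrix such that m·P(i,j) ∈ ℕ for all i, j. Consider the polynomial D(X) = det(I − X·P) (the determinant of the matrix I − X·P with polynomial entries). Then D has degree at most n, the polynomial m^n·D has integer coefficients, the absolute value of the coefficient of X^k in m^n·D is at most m^n·C(n,k) (where C(n,k) is the binomial coefficient), and the sum of the absolute values of the coefficients of m^n·D is at most m^n·2^n. -/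
open Polynomial

/-- The characteristic-like polynomial `D(X) = det (I - X • P)` of a matrix `P`,
computed in the polynomial ring `ℝ[X]`. -/
noncomputable def detOneSubXSmul {n : ℕ} (P : Matrix (Fin n) (Fin n) ℝ) : Polynomial ℝ :=
  Matrix.det ((1 : Matrix (Fin n) (Fin n) ℝ[X]) - (X : ℝ[X]) • P.map C)

lemma aux_abs_coeff_prod_le {ι : Type*} (s : Finset ι) (p q : ι → ℝ[X])
    (h : ∀ i ∈ s, ∀ j, |(p i).coeff j| ≤ (q i).coeff j) :
    ∀ k, |(∏ i ∈ s, p i).coeff k| ≤ (∏ i ∈ s, q i).coeff k := by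
  induction s using Finset.cons_induction with
  | empty => intro k; simp [Polynomial.coeff_one]; split <;> simp
  | cons a s ha ih =>
    intro k
    rw [Finset.prod_cons, Finset.prod_cons, Polynomial.coeff_mul, Polynomial.coeff_mul]
    refine (Finset.abs_sum_le_sum_abs _ _).trans (Finset.sum_le_sum ?_)
    intro x _
    rw [abs_mul]
    exact mul_le_mul (h a (Finset.mem_cons_self a s) x.1)
      (ih (fun i hi j => h i (Finset.mem_cons_of_mem hi) j) x.2) (abs_nonneg _)
      ((abs_nonneg _).trans (h a (Finset.mem_cons_self a s) x.1))

lemma aux_coeff_prod_nonneg {ι : Type*} (s : Finset ι) (q : ι → ℝ[X])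
    (h : ∀ i ∈ s, ∀ j, 0 ≤ (q i).coeff j) (k : ℕ) : 0 ≤ (∏ i ∈ s, q i).coeff k :=
  le_trans (abs_nonneg _)
    (aux_abs_coeff_prod_le s q q (fun i hi j => le_of_eq (abs_of_nonneg (h i hi j))) k)

lemma aux_linear_coeff (a b : ℝ) (j : ℕ) :
    (C a + C b * X).coeff j = if j = 0 then a else if j = 1 then b else 0 := by
  rcases j with _ | _ | j <;> simp [coeff_C]

lemma aux_abs_coeff_detOneSubXSmul_le {n : ℕ} (P : Matrix (Fin n) (Fin n) ℝ)
    (hnonneg : ∀ i j, 0 ≤ P i j) (hrow : ∀ i, ∑ j, P i j = 1) (k : ℕ) :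
    |(detOneSubXSmul P).coeff k| ≤ (n.choose k : ℝ) := by
  classical
  set Q : Fin n → Fin n → ℝ[X] := fun i j => C (if i = j then 1 else 0) + C (P i j) * X with hQ
  have hQcoeff : ∀ i j l, 0 ≤ (Q i j).coeff l := by
    intro i j l
    rw [hQ, aux_linear_coeff]
    split
    · split <;> simp
    · split
      · exact hnonneg i j
      · exact le_refl 0
  set M : Matrix (Fin n) (Fin n) ℝ[X] :=
    (1 : Matrix (Fin n) (Fin n) ℝ[X]) - (X : ℝ[X]) • P.map C with hM
  have hMentry : ∀ i j, M i j = C (if i = j then 1 else 0) - X * C (P i j) := by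
    intro i j
    simp only [hM, Matrix.sub_apply, Matrix.one_apply, Matrix.smul_apply, Matrix.map_apply,
      smul_eq_mul]
    split <;> simp
  have habs : ∀ i j l, |(M i j).coeff l| ≤ (Q i j).coeff l := by
    intro i j l
    have : M i j = C (if i = j then 1 else 0) + C (-(P i j)) * X := by
      rw [hMentry, map_neg]; ring
    rw [this, aux_linear_coeff, hQ]
    simp only [aux_linear_coeff]
    split
    · split <;> simp
    · split
      · rw [abs_neg, abs_of_nonneg (hnonneg i j)]
      · simp
  have step1 : |(detOneSubXSmul P).coeff k|
      ≤ ∑ σ : Equiv.Perm (Fin n), (∏ i, Q i (σ i)).coeff k := by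
    rw [detOneSubXSmul, ← hM, ← Matrix.det_transpose, Matrix.det_apply,
      Polynomial.finset_sum_coeff]
    refine (Finset.abs_sum_le_sum_abs _ _).trans (Finset.sum_le_sum ?_)
    intro σ _
    rw [Polynomial.coeff_smul]
    have h2 := aux_abs_coeff_prod_le Finset.univ (fun i => M.transpose (σ i) i) (fun i => Q i (σ i))
      (fun i _ j => by simpa [Matrix.transpose_apply] using habs i (σ i) j) k
    rcases Int.units_eq_one_or (Equiv.Perm.sign σ) with h | h <;> rw [h] <;>
      simpa using h2
  have step2 : ∑ σ : Equiv.Perm (Fin n), (∏ i, Q i (σ i)).coeff k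
      ≤ ∑ f : Fin n → Fin n, (∏ i, Q i (f i)).coeff k := by
    have himg : ∑ σ : Equiv.Perm (Fin n), (∏ i, Q i (σ i)).coeff k
        = ∑ f ∈ Finset.univ.image (fun σ : Equiv.Perm (Fin n) => ⇑σ),
            (∏ i, Q i (f i)).coeff k := by
      rw [Finset.sum_image (fun a _ b _ hab => by exact Equiv.coe_fn_injective hab)]
    rw [himg]
    exact Finset.sum_le_sum_of_subset_of_nonneg (Finset.subset_univ _)
      (fun f _ _ => aux_coeff_prod_nonneg _ _ (fun i _ l => hQcoeff i (f i) l) k)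
  have step3 : ∑ f : Fin n → Fin n, (∏ i, Q i (f i)).coeff k = (n.choose k : ℝ) := by
    have : ∑ f : Fin n → Fin n, (∏ i, Q i (f i)).coeff k
        = (∑ f : Fin n → Fin n, ∏ i, Q i (f i)).coeff k := by
      rw [Polynomial.finset_sum_coeff]
    rw [this, ← Fintype.prod_sum]
    have hsum : ∀ i, ∑ j, Q i j = 1 + X := by
      intro i
      rw [hQ]
      rw [Finset.sum_add_distrib, ← Finset.sum_mul, ← map_sum, ← map_sum]
      rw [Finset.sum_ite_eq Finset.univ i (fun _ => (1:ℝ))]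
      simp [hrow i]
    rw [Finset.prod_congr rfl (fun i _ => hsum i), Finset.prod_const, Finset.card_univ,
      Fintype.card_fin, Polynomial.coeff_one_add_X_pow]
  calc |(detOneSubXSmul P).coeff k| ≤ _ := step1
    _ ≤ _ := step2
    _ = _ := step3

/-- If `P` is an `n × n` row-stochastic matrix with `m • P` having natural-number entries,
then `D(X) = det (I - X • P)` has degree at most `n`, `m^n • D` has integer coefficients,
the `k`-th coefficient of `m^n • D` is at most `m^n * C(n,k)` in absolute value, and the sum
of absolute values of the coefficients of `m^n • D` is at most `m^n * 2^n`. -/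
theorem det_one_sub_X_smul_stochastic_bounds
    (n m : ℕ) (hn : 1 ≤ n) (hm : 1 ≤ m)
    (P : Matrix (Fin n) (Fin n) ℝ)
    (hnonneg : ∀ i j, 0 ≤ P i j) (hrow : ∀ i, ∑ j, P i j = 1)
    (hrat : ∀ i j, ∃ k : ℕ, (m : ℝ) * P i j = k) :
    (detOneSubXSmul P).natDegree ≤ n ∧
    (∀ k : ℕ, ∃ z : ℤ, ((m : ℝ) ^ n * (detOneSubXSmul P).coeff k) = z) ∧
    (∀ k : ℕ, |(m : ℝ) ^ n * (detOneSubXSmul P).coeff k| ≤ (m : ℝ) ^ n * n.choose k) ∧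
    (∑ k ∈ (C ((m : ℝ) ^ n) * detOneSubXSmul P).support,
        |(C ((m : ℝ) ^ n) * detOneSubXSmul P).coeff k| ≤ (m : ℝ) ^ n * 2 ^ n) := by
  classical
  have hmpos : (0:ℝ) < (m:ℝ)^n := by positivity
  -- degree bound
  have hdeg : (detOneSubXSmul P).natDegree ≤ n := by
    have h := Polynomial.natDegree_det_X_add_C_le (-P) (1 : Matrix (Fin n) (Fin n) ℝ)
    have heq : ((X : ℝ[X]) • (-P).map C + (1 : Matrix (Fin n) (Fin n) ℝ).map C
        : Matrix (Fin n) (Fin n) ℝ[X])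
        = (1 : Matrix (Fin n) (Fin n) ℝ[X]) - (X : ℝ[X]) • P.map C := by
      apply Matrix.ext
      intro i j
      simp only [Matrix.one_apply, Matrix.map_apply, Matrix.add_apply, Matrix.sub_apply,
        Matrix.smul_apply, smul_eq_mul, apply_ite C, map_neg, map_one, map_zero, Matrix.neg_apply]
      split <;> ring
    rw [heq, Fintype.card_fin] at h
    exact h
  -- coefficient abs bound
  have hcoeffb : ∀ k : ℕ, |(m : ℝ) ^ n * (detOneSubXSmul P).coeff k|
      ≤ (m : ℝ) ^ n * n.choose k := by
    intro k
    rw [abs_mul, abs_of_pos hmpos]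
    exact mul_le_mul_of_nonneg_left (aux_abs_coeff_detOneSubXSmul_le P hnonneg hrow k)
      hmpos.le
  refine ⟨hdeg, ?_, hcoeffb, ?_⟩
  · -- integrality
    intro k
    choose K hK using hrat
    set N : Matrix (Fin n) (Fin n) ℤ[X] :=
      fun i j => C (if i = j then (m:ℤ) else 0) - C ((K i j : ℤ)) * X with hN
    refine ⟨(N.det).coeff k, ?_⟩
    have hmap : N.map (Polynomial.map (Int.castRingHom ℝ))
        = C ((m:ℝ)) • ((1 : Matrix (Fin n) (Fin n) ℝ[X]) - (X : ℝ[X]) • P.map C) := by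
      apply Matrix.ext
      intro i j
      have hKr : ((K i j : ℕ) : ℝ[X]) = ((m : ℕ) : ℝ[X]) * C (P i j) := by
        rw [← Polynomial.C_eq_natCast (K i j), ← hK i j, map_mul, Polynomial.C_eq_natCast]
      rcases eq_or_ne i j with rfl | hij
      · rw [Matrix.map_apply]
        simp only [hN, Matrix.map_apply, Matrix.smul_apply, Matrix.sub_apply,
          Matrix.one_apply_eq, if_pos rfl, Polynomial.map_sub, Polynomial.map_mul,
          Polynomial.map_C, Polynomial.map_X, smul_eq_mul]
        simp only [map_natCast, map_zero, Polynomial.C_eq_natCast, Int.coe_castRingHom,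
          Int.cast_natCast]
        rw [hKr]
        push_cast [Polynomial.C_eq_natCast]
        ring
      · rw [Matrix.map_apply]
        simp only [hN, Matrix.map_apply, Matrix.smul_apply, Matrix.sub_apply,
          Matrix.one_apply, if_neg hij, Polynomial.map_sub, Polynomial.map_mul,
          Polynomial.map_C, Polynomial.map_X, smul_eq_mul]
        simp only [map_natCast, map_zero, Polynomial.C_eq_natCast]
        rw [hKr]
        push_cast [Polynomial.C_eq_natCast]
        ring
    have hdet : (N.det).map (Int.castRingHom ℝ)
        = C ((m:ℝ)^n) * detOneSubXSmul P := by
      have h1 : (N.det).map (Int.castRingHom ℝ)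
          = (N.map (Polynomial.map (Int.castRingHom ℝ))).det := by
        rw [← Polynomial.coe_mapRingHom, RingHom.map_det, RingHom.mapMatrix_apply,
          Polynomial.coe_mapRingHom]
      rw [h1, hmap, Matrix.det_smul, Fintype.card_fin, detOneSubXSmul, ← map_pow]
    have := congrArg (fun p => p.coeff k) hdet
    simp only [Polynomial.coeff_map, Polynomial.coeff_C_mul] at this
    rw [← this]
    simp
  · -- sum of abs of coefficients
    have hsupp : (C ((m : ℝ) ^ n) * detOneSubXSmul P).support ⊆ Finset.range (n+1) := by
      intro k hk
      have := Polynomial.le_natDegree_of_mem_supp k hk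
      have h2 : (C ((m : ℝ) ^ n) * detOneSubXSmul P).natDegree ≤ n :=
        (Polynomial.natDegree_C_mul_le _ _).trans hdeg
      exact Finset.mem_range.mpr (Nat.lt_succ_of_le (this.trans h2))
    calc ∑ k ∈ (C ((m : ℝ) ^ n) * detOneSubXSmul P).support,
          |(C ((m : ℝ) ^ n) * detOneSubXSmul P).coeff k|
        ≤ ∑ k ∈ Finset.range (n+1), |(C ((m : ℝ) ^ n) * detOneSubXSmul P).coeff k| :=
          Finset.sum_le_sum_of_subset_of_nonneg hsupp (fun _ _ _ => abs_nonneg _)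
      _ ≤ ∑ k ∈ Finset.range (n+1), (m : ℝ) ^ n * n.choose k := by
          refine Finset.sum_le_sum fun k _ => ?_
          rw [Polynomial.coeff_C_mul]
          exact hcoeffb k
      _ = (m : ℝ) ^ n * 2 ^ n := by
          rw [← Finset.mul_sum, ← Nat.cast_sum]
          norm_num [Nat.sum_range_choose]
end

section
/- Let n ≥ 1, m ≥ 1, r∞ ∈ ℕ, let P be an n × n row-stochastic real matrix with m·P(i,j) ∈ ℕ for all i, j, and let r ∈ ℝ^n be a vector such that for each i, r_i = q_i/m for some q_i ∈ ℤ with |q_i| ≤ r∞. Fix an index s and let N_s(X) be the determinant of the matrix obtained from I − X·P by replacing its s-th column with r. Then N_s has degree at most n − 1, the polynomial m^n·N_s has integer coefficients, the absolute value of the coefficient of X^k in m^n·N_s is at most 2·m^n·n·r∞·C(n−1,k), and the sum of the absolute values of the coefficients of m^n·N_s is at most m^n·n·r∞·2^n. -/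
open Polynomial

section Aux

open Finset

private lemma coeff_prod_linear' {ι : Type*} [DecidableEq ι] (t : Finset ι) (a b : ι → ℝ)
    (k : ℕ) :
    (∏ i ∈ t, (C (a i) + C (b i) * X)).coeff k
      = ∑ T ∈ t.powersetCard k, (∏ i ∈ T, b i) * ∏ i ∈ t \ T, a i := by
  have h1 : ∀ i ∈ t, C (a i) + C (b i) * X = C (b i) * X + C (a i) := fun i _ => add_comm _ _
  rw [Finset.prod_congr rfl h1, Finset.prod_add, finset_sum_coeff]
  have h2 : ∀ T ∈ t.powerset,
      ((∏ i ∈ T, C (b i) * X) * ∏ i ∈ t \ T, C (a i)).coeff k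
        = if T.card = k then (∏ i ∈ T, b i) * ∏ i ∈ t \ T, a i else 0 := by
    intro T _
    rw [Finset.prod_mul_distrib, Finset.prod_const, ← map_prod, ← map_prod,
      mul_comm (C (∏ i ∈ T, b i)) (X ^ T.card), mul_assoc, ← map_mul,
      mul_comm (X ^ T.card), coeff_C_mul_X_pow]
    simp [eq_comm]
  rw [Finset.sum_congr rfl h2, powersetCard_eq_filter, Finset.sum_filter]

private lemma sum_perm_prod_le' {n : ℕ} (P : Matrix (Fin n) (Fin n) ℝ)
    (hnn : ∀ i j, 0 ≤ P i j)
    (hrow : ∀ i, ∑ j, P i j = 1) (i0 s : Fin n) (T : Finset (Fin n)) (hT : i0 ∉ T) :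
    ∑ σ ∈ Finset.univ.filter (fun σ : Equiv.Perm (Fin n) => σ.symm s = i0),
      (∏ i ∈ T, P i (σ i)) * ∏ i ∈ Finset.univ.erase i0 \ T, (if i = σ i then (1:ℝ) else 0)
      ≤ 1 := by
  classical
  set D : Finset (Fin n) := Finset.univ.erase i0 \ T with hD
  set A : Finset (Equiv.Perm (Fin n)) :=
    Finset.univ.filter (fun σ => σ.symm s = i0 ∧ ∀ i ∈ D, σ i = i) with hA
  have hsub : A ⊆ Finset.univ.filter (fun σ : Equiv.Perm (Fin n) => σ.symm s = i0) := by
    intro σ hσ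
    simp only [hA, Finset.mem_filter] at hσ ⊢
    exact ⟨hσ.1, hσ.2.1⟩
  have hstep1 : ∑ σ ∈ Finset.univ.filter (fun σ : Equiv.Perm (Fin n) => σ.symm s = i0),
      (∏ i ∈ T, P i (σ i)) * ∏ i ∈ D, (if i = σ i then (1:ℝ) else 0)
      = ∑ σ ∈ A, (∏ i ∈ T, P i (σ i)) * ∏ i ∈ D, (if i = σ i then (1:ℝ) else 0) := by
    refine (Finset.sum_subset hsub ?_).symm
    intro σ hσ hσ'
    have hmem := Finset.mem_filter.mp hσ
    by_cases hfix : ∀ i ∈ D, σ i = i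
    · exact absurd (Finset.mem_filter.mpr ⟨Finset.mem_univ σ, hmem.2, hfix⟩) hσ'
    · push_neg at hfix
      obtain ⟨i, hi, hne⟩ := hfix
      have : ∏ i ∈ D, (if i = σ i then (1:ℝ) else 0) = 0 :=
        Finset.prod_eq_zero hi (by simp [Ne.symm hne])
      rw [this, mul_zero]
  have hstep2 : ∀ σ ∈ A, (∏ i ∈ T, P i (σ i)) * ∏ i ∈ D, (if i = σ i then (1:ℝ) else 0)
      = ∏ x : {x // x ∈ T}, P ↑x (σ ↑x) := by
    intro σ hσ
    simp only [hA, Finset.mem_filter] at hσ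
    rw [Finset.prod_congr rfl (fun i hi => if_pos (hσ.2.2 i hi).symm), Finset.prod_const_one,
      mul_one, Finset.univ_eq_attach]
    exact (Finset.prod_attach T fun i => P i (σ i)).symm
  rw [hstep1, Finset.sum_congr rfl hstep2]
  have hinj : ∀ σ ∈ A, ∀ τ ∈ A,
      (fun x : {x // x ∈ T} => σ ↑x) = (fun x : {x // x ∈ T} => τ ↑x) → σ = τ := by
    intro σ hσ τ hτ h
    simp only [hA, Finset.mem_filter] at hσ hτ
    refine Equiv.ext fun i => ?_
    by_cases hiT : i ∈ T
    · exact congrFun h ⟨i, hiT⟩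
    · by_cases hi0 : i = i0
      · subst hi0
        exact ((Equiv.symm_apply_eq σ).mp hσ.2.1).symm.trans ((Equiv.symm_apply_eq τ).mp hτ.2.1)
      · have hiD : i ∈ D := by simp [hD, hi0, hiT]
        rw [hσ.2.2 i hiD, hτ.2.2 i hiD]
  calc ∑ σ ∈ A, ∏ x : {x // x ∈ T}, P ↑x (σ ↑x)
      = ∑ g ∈ A.image (fun σ (x : {x // x ∈ T}) => σ ↑x), ∏ x : {x // x ∈ T}, P ↑x (g x) := by
        rw [Finset.sum_image hinj]
    _ ≤ ∑ g : {x // x ∈ T} → Fin n, ∏ x : {x // x ∈ T}, P ↑x (g x) := by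
        refine Finset.sum_le_sum_of_subset_of_nonneg (Finset.subset_univ _) ?_
        intro g _ _
        exact Finset.prod_nonneg fun x _ => hnn _ _
    _ = ∏ x : {x // x ∈ T}, ∑ j, P ↑x j := by
        rw [Finset.prod_univ_sum]
        simp
    _ = 1 := by simp [hrow]

end Aux

/-- The polynomial `N_s(X)`: the determinant of the matrix obtained from `I - X • P`
(in `ℝ[X]`) by replacing its `s`-th column with the (constant) vector `r`. -/
noncomputable def detOneSubXSmulUpdateCol {n : ℕ} (P : Matrix (Fin n) (Fin n) ℝ)
    (r : Fin n → ℝ) (s : Fin n) : Polynomial ℝ :=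
  Matrix.det
    (Matrix.updateCol ((1 : Matrix (Fin n) (Fin n) ℝ[X]) - (X : ℝ[X]) • P.map C) s
      fun i => C (r i))

section Aux2

open Finset

private lemma abs_coeff_det_le' {n : ℕ} (P : Matrix (Fin n) (Fin n) ℝ)
    (hnn : ∀ i j, 0 ≤ P i j) (hrow : ∀ i, ∑ j, P i j = 1)
    (r : Fin n → ℝ) (ρ : ℝ) (hρ : 0 ≤ ρ) (hr : ∀ i, |r i| ≤ ρ) (s : Fin n) (k : ℕ) :
    |(detOneSubXSmulUpdateCol P r s).coeff k| ≤ n * ρ * (n - 1).choose k := by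
  classical
  set U : Matrix (Fin n) (Fin n) ℝ[X] :=
    Matrix.updateCol ((1 : Matrix (Fin n) (Fin n) ℝ[X]) - (X : ℝ[X]) • P.map C) s
      fun i => C (r i) with hU
  have hentry : ∀ (i j : Fin n), j ≠ s →
      U i j = C (if i = j then (1:ℝ) else 0) + C (-(P i j)) * X := by
    intro i j hj
    simp only [hU, Matrix.updateCol_apply, if_neg hj, Matrix.sub_apply, Matrix.one_apply,
      Matrix.smul_apply, Matrix.map_apply, smul_eq_mul]
    rw [apply_ite C, map_one, map_zero, map_neg]
    ring
  have hdet : detOneSubXSmulUpdateCol P r s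
      = ∑ σ : Equiv.Perm (Fin n), ((Equiv.Perm.sign σ : ℤ) : ℝ[X]) * ∏ i, U i (σ i) := by
    rw [detOneSubXSmulUpdateCol, ← hU, ← Matrix.det_transpose U, Matrix.det_apply']
    simp [Matrix.transpose_apply]
  have hterm : ∀ σ : Equiv.Perm (Fin n),
      |(∏ i, U i (σ i)).coeff k| ≤ |r (σ.symm s)| *
        ∑ T ∈ (Finset.univ.erase (σ.symm s)).powersetCard k,
          (∏ i ∈ T, P i (σ i)) *
            ∏ i ∈ Finset.univ.erase (σ.symm s) \ T, (if i = σ i then (1:ℝ) else 0) := by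
    intro σ
    set i0 := σ.symm s with hi0
    have hσi0 : σ i0 = s := Equiv.apply_symm_apply σ s
    have hprod : ∏ i, U i (σ i) = C (r i0) *
        ∏ i ∈ Finset.univ.erase i0,
          (C (if i = σ i then (1:ℝ) else 0) + C (-(P i (σ i))) * X) := by
      rw [← Finset.prod_erase_mul Finset.univ _ (Finset.mem_univ i0)]
      rw [mul_comm]
      congr 1
      · rw [hσi0]
        simp [hU, Matrix.updateCol_apply]
      · refine Finset.prod_congr rfl fun i hi => ?_
        have hne : σ i ≠ s := by
          intro h
          exact (Finset.mem_erase.mp hi).1 (by rw [hi0, ← h, Equiv.symm_apply_apply])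
        exact hentry i (σ i) hne
    rw [hprod, coeff_C_mul, coeff_prod_linear']
    rw [abs_mul]
    refine mul_le_mul_of_nonneg_left ?_ (abs_nonneg _)
    refine (Finset.abs_sum_le_sum_abs _ _).trans ?_
    refine Finset.sum_le_sum fun T hT => ?_
    rw [abs_mul, abs_prod, abs_prod]
    refine mul_le_mul ?_ ?_ (Finset.prod_nonneg fun i _ => abs_nonneg _) ?_
    · exact le_of_eq (Finset.prod_congr rfl fun i _ => by
        rw [abs_neg, abs_of_nonneg (hnn _ _)])
    · exact le_of_eq (Finset.prod_congr rfl fun i _ => by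
        split_ifs <;> simp)
    · exact Finset.prod_nonneg fun i _ => hnn _ _
  have habs : |(detOneSubXSmulUpdateCol P r s).coeff k|
      ≤ ∑ σ : Equiv.Perm (Fin n), |(∏ i, U i (σ i)).coeff k| := by
    rw [hdet, finset_sum_coeff]
    refine (Finset.abs_sum_le_sum_abs _ _).trans (Finset.sum_le_sum fun σ _ => ?_)
    rw [← map_intCast (C : ℝ →+* ℝ[X]) (Equiv.Perm.sign σ : ℤ), coeff_C_mul, abs_mul]
    rcases Int.units_eq_one_or (Equiv.Perm.sign σ) with h | h <;> simp [h]
  refine habs.trans ?_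
  refine (Finset.sum_le_sum fun σ _ => hterm σ).trans ?_
  rw [← Finset.sum_fiberwise Finset.univ (fun σ : Equiv.Perm (Fin n) => σ.symm s) _]
  have hfiber : ∀ i0 : Fin n,
      ∑ σ ∈ Finset.univ.filter (fun σ : Equiv.Perm (Fin n) => σ.symm s = i0),
        (|r (σ.symm s)| * ∑ T ∈ (Finset.univ.erase (σ.symm s)).powersetCard k,
          (∏ i ∈ T, P i (σ i)) *
            ∏ i ∈ Finset.univ.erase (σ.symm s) \ T, (if i = σ i then (1:ℝ) else 0))
      ≤ ρ * (n - 1).choose k := by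
    intro i0
    have hcongr : ∀ σ ∈ Finset.univ.filter (fun σ : Equiv.Perm (Fin n) => σ.symm s = i0),
        (|r (σ.symm s)| * ∑ T ∈ (Finset.univ.erase (σ.symm s)).powersetCard k,
          (∏ i ∈ T, P i (σ i)) *
            ∏ i ∈ Finset.univ.erase (σ.symm s) \ T, (if i = σ i then (1:ℝ) else 0))
        = (|r i0| * ∑ T ∈ (Finset.univ.erase i0).powersetCard k,
          (∏ i ∈ T, P i (σ i)) *
            ∏ i ∈ Finset.univ.erase i0 \ T, (if i = σ i then (1:ℝ) else 0)) := by
      intro σ hσ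
      rw [(Finset.mem_filter.mp hσ).2]
    rw [Finset.sum_congr rfl hcongr, ← Finset.mul_sum, Finset.sum_comm]
    have hinner : ∑ T ∈ (Finset.univ.erase i0).powersetCard k,
        ∑ σ ∈ Finset.univ.filter (fun σ : Equiv.Perm (Fin n) => σ.symm s = i0),
          (∏ i ∈ T, P i (σ i)) *
            ∏ i ∈ Finset.univ.erase i0 \ T, (if i = σ i then (1:ℝ) else 0)
        ≤ ∑ T ∈ (Finset.univ.erase i0).powersetCard k, 1 := by
      refine Finset.sum_le_sum fun T hT => ?_
      have hTs : i0 ∉ T := by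
        intro h
        have := Finset.mem_powersetCard.mp hT
        exact (Finset.mem_erase.mp (this.1 h)).1 rfl
      exact sum_perm_prod_le' P hnn hrow i0 s T hTs
    calc |r i0| * ∑ T ∈ (Finset.univ.erase i0).powersetCard k,
        ∑ σ ∈ Finset.univ.filter (fun σ : Equiv.Perm (Fin n) => σ.symm s = i0),
          (∏ i ∈ T, P i (σ i)) *
            ∏ i ∈ Finset.univ.erase i0 \ T, (if i = σ i then (1:ℝ) else 0)
        ≤ ρ * ∑ T ∈ (Finset.univ.erase i0).powersetCard k, (1:ℝ) := by
          refine mul_le_mul (hr i0) hinner ?_ hρ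
          refine Finset.sum_nonneg fun T _ => Finset.sum_nonneg fun σ _ => ?_
          refine mul_nonneg (Finset.prod_nonneg fun i _ => hnn _ _)
            (Finset.prod_nonneg fun i _ => by split_ifs <;> norm_num)
      _ = ρ * (n - 1).choose k := by
          rw [Finset.sum_const, Finset.card_powersetCard]
          simp [Finset.card_erase_of_mem, Finset.card_univ, mul_comm]
  calc ∑ i0 : Fin n, ∑ σ ∈ Finset.univ.filter (fun σ : Equiv.Perm (Fin n) => σ.symm s = i0),
        (|r (σ.symm s)| * ∑ T ∈ (Finset.univ.erase (σ.symm s)).powersetCard k,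
          (∏ i ∈ T, P i (σ i)) *
            ∏ i ∈ Finset.univ.erase (σ.symm s) \ T, (if i = σ i then (1:ℝ) else 0))
      ≤ ∑ _i0 : Fin n, ρ * (n - 1).choose k := Finset.sum_le_sum fun i0 _ => hfiber i0
    _ = n * ρ * (n - 1).choose k := by
        rw [Finset.sum_const, Finset.card_univ]
        simp only [Fintype.card_fin, nsmul_eq_mul]
        ring

private lemma natDegree_detOneSub_le' {n : ℕ} (P : Matrix (Fin n) (Fin n) ℝ)
    (r : Fin n → ℝ) (s : Fin n) :
    (detOneSubXSmulUpdateCol P r s).natDegree ≤ n - 1 := by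
  classical
  set U : Matrix (Fin n) (Fin n) ℝ[X] :=
    Matrix.updateCol ((1 : Matrix (Fin n) (Fin n) ℝ[X]) - (X : ℝ[X]) • P.map C) s
      fun i => C (r i) with hU
  have hentry : ∀ (i j : Fin n), (U i j).natDegree ≤ 1 := by
    intro i j
    by_cases hj : j = s
    · simp [hU, Matrix.updateCol_apply, hj]
    · simp only [hU, Matrix.updateCol_apply, if_neg hj, Matrix.sub_apply, Matrix.one_apply,
        Matrix.smul_apply, Matrix.map_apply, smul_eq_mul]
      refine (natDegree_sub_le _ _).trans ?_
      simp only [max_le_iff]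
      constructor
      · split_ifs <;> simp
      · refine le_trans (natDegree_mul_le) ?_
        simp
  have hcol : ∀ i : Fin n, (U i s).natDegree = 0 := by
    intro i
    simp [hU, Matrix.updateCol_apply]
  have hdet : detOneSubXSmulUpdateCol P r s
      = ∑ σ : Equiv.Perm (Fin n), ((Equiv.Perm.sign σ : ℤ) : ℝ[X]) * ∏ i, U i (σ i) := by
    rw [detOneSubXSmulUpdateCol, ← hU, ← Matrix.det_transpose U, Matrix.det_apply']
    simp [Matrix.transpose_apply]
  rw [hdet]
  refine natDegree_sum_le_of_forall_le _ _ fun σ _ => ?_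
  rw [← map_intCast (C : ℝ →+* ℝ[X])]
  refine (natDegree_C_mul_le _ _).trans ?_
  set i0 := σ.symm s with hi0
  have hσi0 : σ i0 = s := Equiv.apply_symm_apply σ s
  rw [← Finset.prod_erase_mul Finset.univ _ (Finset.mem_univ i0)]
  refine (natDegree_mul_le).trans ?_
  have h1 : (∏ i ∈ Finset.univ.erase i0, U i (σ i)).natDegree ≤ n - 1 := by
    refine (natDegree_prod_le _ _).trans ?_
    calc ∑ i ∈ Finset.univ.erase i0, (U i (σ i)).natDegree
        ≤ ∑ i ∈ Finset.univ.erase i0, 1 := Finset.sum_le_sum fun i _ => hentry _ _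
      _ = n - 1 := by
          rw [Finset.sum_const, smul_eq_mul, mul_one,
            Finset.card_erase_of_mem (Finset.mem_univ _), Finset.card_univ, Fintype.card_fin]
  have h2 : (U i0 (σ i0)).natDegree = 0 := by rw [hσi0]; exact hcol i0
  omega

private lemma exists_int_coeff' {n m : ℕ} (hm : 1 ≤ m) (P : Matrix (Fin n) (Fin n) ℝ)
    (hrat : ∀ i j, ∃ k : ℕ, (m : ℝ) * P i j = k)
    (r : Fin n → ℝ) (hr : ∀ i, ∃ q : ℤ, r i = (q : ℝ) / m)
    (s : Fin n) (k : ℕ) :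
    ∃ z : ℤ, ((m : ℝ) ^ n * (detOneSubXSmulUpdateCol P r s).coeff k) = z := by
  classical
  have hm0 : (m : ℝ) ≠ 0 := by positivity
  choose pnat hpnat using hrat
  choose qv hqv using hr
  set U : Matrix (Fin n) (Fin n) ℝ[X] :=
    Matrix.updateCol ((1 : Matrix (Fin n) (Fin n) ℝ[X]) - (X : ℝ[X]) • P.map C) s
      fun i => C (r i) with hU
  set φ : ℤ[X] →+* ℝ[X] := Polynomial.mapRingHom (Int.castRingHom ℝ) with hφ
  set Mz : Matrix (Fin n) (Fin n) ℤ[X] := fun i j =>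
    if j = s then C (qv i) else C (if i = j then (m:ℤ) else 0) - X * C ((pnat i j : ℤ)) with hMz
  have hmap : ∀ i j, φ (Mz i j) = C (m:ℝ) * U i j := by
    intro i j
    by_cases hj : j = s
    · subst hj
      have h1 : Mz i j = C (qv i) := by simp [hMz]
      have h2 : U i j = C (r i) := by simp [hU, Matrix.updateCol_apply]
      rw [h1, h2, hφ]
      simp only [coe_mapRingHom, map_C]
      rw [← map_mul]
      congr 1
      rw [hqv i, mul_div_cancel₀ _ hm0]
      simp
    · have h1 : Mz i j = C (if i = j then (m:ℤ) else 0) - X * C ((pnat i j : ℤ)) := by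
        simp [hMz, hj]
      have h2 : U i j = (if i = j then (1:ℝ[X]) else 0) - X * C (P i j) := by
        simp [hU, Matrix.updateCol_apply, hj, Matrix.sub_apply, Matrix.one_apply,
          Matrix.smul_apply, Matrix.map_apply, smul_eq_mul]
      rw [h1, h2, hφ]
      simp only [coe_mapRingHom, Polynomial.map_sub, Polynomial.map_mul, Polynomial.map_X, map_C]
      rw [mul_sub]
      congr 1
      · rw [apply_ite (⇑(Int.castRingHom ℝ)), apply_ite C]
        split_ifs <;> simp
      · rw [mul_left_comm, ← map_mul, hpnat i j]
        simp
  have hmapM : φ.mapMatrix Mz = (C (m:ℝ)) • U := by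
    apply Matrix.ext
    intro i j
    rw [RingHom.mapMatrix_apply, Matrix.map_apply, Matrix.smul_apply, smul_eq_mul]
    exact hmap i j
  have hdet2 : φ Mz.det = C ((m:ℝ)^n) * U.det := by
    rw [RingHom.map_det, hmapM, Matrix.det_smul, Fintype.card_fin, ← map_pow]
  refine ⟨Mz.det.coeff k, ?_⟩
  have := congrArg (fun p => p.coeff k) hdet2
  simp only [hφ, coe_mapRingHom, coeff_map, coeff_C_mul] at this
  rw [detOneSubXSmulUpdateCol, ← hU, ← this]
  simp

end Aux2

/-- Let `P` be `n × n` row-stochastic with `m • P` having natural-number entries, and let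
`r` have entries `qᵢ/m` with `qᵢ ∈ ℤ`, `|qᵢ| ≤ r∞`. Then `N_s` has degree at most `n - 1`,
`m^n • N_s` has integer coefficients, its `k`-th coefficient is at most
`2 * m^n * n * r∞ * C(n-1,k)` in absolute value, and the sum of the absolute values of its
coefficients is at most `m^n * n * r∞ * 2^n`. -/
theorem det_one_sub_X_smul_updateColumn_bounds
    (n m : ℕ) (rinf : ℕ) (hn : 1 ≤ n) (hm : 1 ≤ m)
    (P : Matrix (Fin n) (Fin n) ℝ)
    (hnonneg : ∀ i j, 0 ≤ P i j) (hrow : ∀ i, ∑ j, P i j = 1)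
    (hrat : ∀ i j, ∃ k : ℕ, (m : ℝ) * P i j = k)
    (r : Fin n → ℝ)
    (hr : ∀ i, ∃ q : ℤ, r i = (q : ℝ) / m ∧ |q| ≤ (rinf : ℤ))
    (s : Fin n) :
    (detOneSubXSmulUpdateCol P r s).natDegree ≤ n - 1 ∧
    (∀ k : ℕ, ∃ z : ℤ, ((m : ℝ) ^ n * (detOneSubXSmulUpdateCol P r s).coeff k) = z) ∧
    (∀ k : ℕ, |(m : ℝ) ^ n * (detOneSubXSmulUpdateCol P r s).coeff k| ≤
      2 * (m : ℝ) ^ n * n * rinf * (n - 1).choose k) ∧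
    (∑ k ∈ (C ((m : ℝ) ^ n) * detOneSubXSmulUpdateCol P r s).support,
        |(C ((m : ℝ) ^ n) * detOneSubXSmulUpdateCol P r s).coeff k| ≤
      (m : ℝ) ^ n * n * rinf * 2 ^ n) := by
  have hmR : (1:ℝ) ≤ (m:ℝ) := by exact_mod_cast hm
  have hm0 : (0:ℝ) < (m:ℝ) := by positivity
  set N := detOneSubXSmulUpdateCol P r s with hN
  have hdeg : N.natDegree ≤ n - 1 := natDegree_detOneSub_le' P r s
  have hrbound : ∀ i, |r i| ≤ (rinf : ℝ) / m := by
    intro i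
    obtain ⟨q, hq1, hq2⟩ := hr i
    rw [hq1, abs_div, abs_of_pos hm0]
    gcongr
    rw [← Int.cast_abs]
    exact_mod_cast hq2
  have hcoeffR : ∀ k, |N.coeff k| ≤ n * ((rinf:ℝ)/m) * (n-1).choose k :=
    fun k => abs_coeff_det_le' P hnonneg hrow r _ (by positivity) hrbound s k
  have part3 : ∀ k : ℕ, |(m : ℝ) ^ n * N.coeff k| ≤
      2 * (m : ℝ) ^ n * n * rinf * (n - 1).choose k := by
    intro k
    rw [abs_mul, abs_of_pos (pow_pos hm0 n)]
    have hch : (0:ℝ) ≤ (n-1).choose k := Nat.cast_nonneg _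
    calc (m:ℝ)^n * |N.coeff k|
        ≤ (m:ℝ)^n * (n * ((rinf:ℝ)/m) * (n-1).choose k) := by
          exact mul_le_mul_of_nonneg_left (hcoeffR k) (le_of_lt (pow_pos hm0 n))
      _ ≤ (m:ℝ)^n * (n * (rinf:ℝ) * (n-1).choose k) := by
          gcongr
          exact div_le_self (Nat.cast_nonneg _) hmR
      _ = (m:ℝ)^n * n * rinf * (n-1).choose k := by ring
      _ ≤ 2 * (m : ℝ) ^ n * n * rinf * (n - 1).choose k := by
          have h0 : (0:ℝ) ≤ (m:ℝ)^n * n * rinf * (n-1).choose k := by positivity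
          linarith
  refine ⟨hdeg, fun k => exists_int_coeff' hm P hrat r
      (fun i => ⟨(hr i).choose, (hr i).choose_spec.1⟩) s k, part3, ?_⟩
  set Q := C ((m : ℝ) ^ n) * N with hQ
  have hQsupp : Q.support ⊆ Finset.range n := by
    intro k hk
    rw [Finset.mem_range]
    by_contra h
    push_neg at h
    have hklt : Q.natDegree < k := by
      have : Q.natDegree ≤ n - 1 := le_trans (natDegree_C_mul_le _ _) hdeg
      omega
    exact Polynomial.mem_support_iff.mp hk (Polynomial.coeff_eq_zero_of_natDegree_lt hklt)
  have hsum_choose : ∑ k ∈ Finset.range n, ((n-1).choose k : ℝ) = 2^(n-1) := by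
    have h1 : ∑ k ∈ Finset.range n, (n-1).choose k = 2^(n-1) := by
      obtain ⟨j, rfl⟩ : ∃ j, n = j + 1 := ⟨n - 1, by omega⟩
      simp [Nat.sum_range_choose]
    exact_mod_cast h1
  calc ∑ k ∈ Q.support, |Q.coeff k|
      ≤ ∑ k ∈ Finset.range n, |Q.coeff k| :=
        Finset.sum_le_sum_of_subset_of_nonneg hQsupp (fun _ _ _ => abs_nonneg _)
    _ ≤ ∑ k ∈ Finset.range n, 2 * (m : ℝ) ^ n * n * rinf * (n - 1).choose k := by
        refine Finset.sum_le_sum fun k _ => ?_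
        rw [hQ, coeff_C_mul]
        exact part3 k
    _ = 2 * (m : ℝ) ^ n * n * rinf * ∑ k ∈ Finset.range n, ((n-1).choose k : ℝ) := by
        rw [Finset.mul_sum]
    _ = (m : ℝ) ^ n * n * rinf * 2 ^ n := by
        rw [hsum_choose]
        have h2 : (2:ℝ) * 2 ^ (n-1) = 2 ^ n := by
          rw [← pow_succ']
          congr 1
          omega
        calc 2 * (m : ℝ) ^ n * n * rinf * 2 ^ (n-1)
            = (m : ℝ) ^ n * n * rinf * (2 * 2 ^ (n-1)) := by ring
          _ = (m : ℝ) ^ n * n * rinf * 2 ^ n := by rw [h2]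
end

section
/- Let the MDP (S, A, r, P) satisfy Assumption R with parameters m and r∞, let π, π' be policies and s ∈ S a state. Let D_π(X) = det(I − X·P_π), D_{π'}(X) = det(I − X·P_{π'}), and let N_{s,π}(X) (resp. N_{s,π'}(X)) be the determinant of the matrix obtained from I − X·P_π (resp. I − X·P_{π'}) by replacing its s-th column with r_π (resp. r_{π'}). Define p = N_{s,π}·D_{π'} − N_{s,π'}·D_π. Then p has degree at most 2|S| − 1, the polynomial m^{2|S|}·p has integer coefficients, and the sum of the absolute values of the coefficients of m^{2|S|}·p is at most L = 2·|S|·r∞·m^{2|S|}·4^{|S|}. -/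
open Polynomial

/-- `D_π(X) = det (I - X • P_π)`, computed in `ℝ[X]`. -/
noncomputable def polyD {S A : Type*} [Fintype S] [DecidableEq S]
    (P : S → A → S → ℝ) (π : S → A) : Polynomial ℝ :=
  Matrix.det ((1 : Matrix S S ℝ[X]) - (X : ℝ[X]) • (policyMatrix P π).map C)

/-- `N_{s,π}(X)`: the determinant of the matrix obtained from `I - X • P_π` by replacing
its `s`-th column with the reward vector `r_π`. -/
noncomputable def polyN {S A : Type*} [Fintype S] [DecidableEq S]
    (r : S → A → ℝ) (P : S → A → S → ℝ) (π : S → A) (s : S) : Polynomial ℝ :=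
  Matrix.det
    (((1 : Matrix S S ℝ[X]) - (X : ℝ[X]) • (policyMatrix P π).map C).updateCol s
      fun i => C (policyReward r π i))

open Polynomial

noncomputable def nu (p : ℝ[X]) : ℝ := ∑ k ∈ p.support, |p.coeff k|

lemma nu_nonneg (p : ℝ[X]) : 0 ≤ nu p :=
  Finset.sum_nonneg fun _ _ => abs_nonneg _

lemma nu_eq_sum (p : ℝ[X]) {t : Finset ℕ} (h : p.support ⊆ t) :
    nu p = ∑ k ∈ t, |p.coeff k| := by
  refine Finset.sum_subset h fun k _ hk => ?_
  simp [Polynomial.notMem_support_iff.mp hk]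

lemma nu_le_of_forall {p : ℝ[X]} {t : Finset ℕ} (h : p.support ⊆ t) {f : ℕ → ℝ}
    (hf : ∀ k ∈ t, |p.coeff k| ≤ f k) : nu p ≤ ∑ k ∈ t, f k := by
  rw [nu_eq_sum p h]; exact Finset.sum_le_sum hf

lemma nu_zero : nu (0 : ℝ[X]) = 0 := by simp [nu]

lemma nu_C (c : ℝ) : nu (C c) = |c| := by
  by_cases h : c = 0
  · simp [nu, h]
  · simp [nu, Polynomial.support_C h]

lemma nu_one : nu (1 : ℝ[X]) = 1 := by
  simpa using nu_C 1

lemma nu_X : nu (X : ℝ[X]) = 1 := by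
  simp [nu, Polynomial.support_X]

lemma nu_neg (p : ℝ[X]) : nu (-p) = nu p := by
  simp [nu]

lemma nu_add_le (p q : ℝ[X]) : nu (p + q) ≤ nu p + nu q := by
  have h : (p + q).support ⊆ p.support ∪ q.support := Polynomial.support_add
  calc nu (p + q) ≤ ∑ k ∈ p.support ∪ q.support, (|p.coeff k| + |q.coeff k|) := by
        refine nu_le_of_forall h fun k _ => ?_
        simpa using abs_add_le (p.coeff k) (q.coeff k)
    _ = (∑ k ∈ p.support ∪ q.support, |p.coeff k|) +
        (∑ k ∈ p.support ∪ q.support, |q.coeff k|) := Finset.sum_add_distrib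
    _ ≤ nu p + nu q := by
        rw [nu_eq_sum p Finset.subset_union_left, nu_eq_sum q Finset.subset_union_right]

lemma nu_sub_le (p q : ℝ[X]) : nu (p - q) ≤ nu p + nu q := by
  rw [sub_eq_add_neg]
  simpa [nu_neg] using nu_add_le p (-q)

lemma nu_sum_le {ι : Type*} (t : Finset ι) (f : ι → ℝ[X]) :
    nu (∑ i ∈ t, f i) ≤ ∑ i ∈ t, nu (f i) := by
  induction t using Finset.cons_induction with
  | empty => simp [nu_zero]
  | cons a t ha ih =>
      rw [Finset.sum_cons, Finset.sum_cons]
      exact (nu_add_le _ _).trans (by linarith)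

lemma nu_C_mul_le (a : ℝ) (p : ℝ[X]) : nu (C a * p) ≤ |a| * nu p := by
  have h : (C a * p).support ⊆ p.support := by
    intro k hk
    rw [Polynomial.mem_support_iff] at hk ⊢
    intro hc; apply hk; rw [Polynomial.coeff_C_mul, hc, mul_zero]
  calc nu (C a * p) ≤ ∑ k ∈ p.support, |a| * |p.coeff k| := by
        refine nu_le_of_forall h fun k _ => ?_
        rw [Polynomial.coeff_C_mul, abs_mul]
    _ = |a| * nu p := by rw [nu, Finset.mul_sum]

lemma nu_mul_X_pow (p : ℝ[X]) (n : ℕ) : nu (p * X ^ n) ≤ nu p := by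
  have h : (p * X ^ n).support ⊆ p.support.image (· + n) := by
    intro k hk
    rw [Polynomial.mem_support_iff, Polynomial.coeff_mul_X_pow'] at hk
    by_cases hn : n ≤ k
    · rw [if_pos hn] at hk
      exact Finset.mem_image.mpr ⟨k - n, Polynomial.mem_support_iff.mpr hk, by omega⟩
    · simp [hn] at hk
  calc nu (p * X ^ n) ≤ ∑ k ∈ p.support.image (· + n), |(p * X ^ n).coeff k| :=
        nu_le_of_forall h fun k _ => le_refl _
    _ = ∑ j ∈ p.support, |(p * X ^ n).coeff (j + n)| :=
        Finset.sum_image (by intro a _ b _ hab; exact Nat.add_right_cancel hab)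
    _ = ∑ j ∈ p.support, |p.coeff j| := by
        refine Finset.sum_congr rfl fun j _ => ?_
        rw [Polynomial.coeff_mul_X_pow]
    _ = nu p := rfl

lemma nu_mul_le (p q : ℝ[X]) : nu (p * q) ≤ nu p * nu q := by
  conv_lhs => rw [p.as_sum_support]
  rw [Finset.sum_mul]
  calc nu (∑ k ∈ p.support, monomial k (p.coeff k) * q)
      ≤ ∑ k ∈ p.support, nu (monomial k (p.coeff k) * q) := nu_sum_le _ _
    _ ≤ ∑ k ∈ p.support, |p.coeff k| * nu q := by
        refine Finset.sum_le_sum fun k _ => ?_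
        have : monomial k (p.coeff k) * q = C (p.coeff k) * (q * X ^ k) := by
          rw [← Polynomial.C_mul_X_pow_eq_monomial]; ring
        rw [this]
        calc nu (C (p.coeff k) * (q * X ^ k)) ≤ |p.coeff k| * nu (q * X ^ k) :=
              nu_C_mul_le _ _
          _ ≤ |p.coeff k| * nu q := by
              have := nu_mul_X_pow q k
              have h0 := abs_nonneg (p.coeff k)
              nlinarith
    _ = nu p * nu q := by rw [nu, ← Finset.sum_mul]; rfl

lemma nu_prod_le {ι : Type*} (t : Finset ι) (f : ι → ℝ[X]) :
    nu (∏ i ∈ t, f i) ≤ ∏ i ∈ t, nu (f i) := by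
  induction t using Finset.cons_induction with
  | empty => simp [nu_one]
  | cons a t ha ih =>
      rw [Finset.prod_cons, Finset.prod_cons]
      calc nu (f a * ∏ i ∈ t, f i) ≤ nu (f a) * nu (∏ i ∈ t, f i) := nu_mul_le _ _
        _ ≤ nu (f a) * ∏ i ∈ t, nu (f i) := by
            exact mul_le_mul_of_nonneg_left ih (nu_nonneg _)
open Polynomial Matrix

/-- permanent-type bound: sum over permutations ≤ product of row sums -/
lemma perm_sum_le {S : Type*} [Fintype S] [DecidableEq S] (f : S → S → ℝ)
    (hf : ∀ i j, 0 ≤ f i j) :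
    ∑ σ : Equiv.Perm S, ∏ i, f i (σ i) ≤ ∏ i, ∑ j, f i j := by
  have himg : ∑ σ : Equiv.Perm S, ∏ i, f i (σ i)
      = ∑ g ∈ Finset.univ.image (fun σ : Equiv.Perm S => (σ : S → S)),
          ∏ i, f i (g i) := by
    rw [Finset.sum_image]
    intro a _ b _ h
    exact Equiv.coe_fn_injective h
  rw [himg, Finset.prod_univ_sum]
  refine Finset.sum_le_sum_of_subset_of_nonneg ?_ fun g _ _ =>
    Finset.prod_nonneg fun i _ => hf _ _
  intro g _
  simp [Fintype.mem_piFinset]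

lemma nu_zsmul_sign {S : Type*} [Fintype S] [DecidableEq S] (σ : Equiv.Perm S) (p : ℝ[X]) :
    nu (Equiv.Perm.sign σ • p) = nu p := by
  rcases Int.units_eq_one_or (Equiv.Perm.sign σ) with h | h <;> rw [h] <;> simp [nu_neg]

/-- ℓ1-norm of determinant bounded by product of row sums of entry norms. -/
lemma nu_det_le {S : Type*} [Fintype S] [DecidableEq S] (M : Matrix S S ℝ[X]) :
    nu M.det ≤ ∏ i, ∑ j, nu (M i j) := by
  rw [← Matrix.det_transpose, Matrix.det_apply]
  calc nu (∑ σ : Equiv.Perm S, Equiv.Perm.sign σ • ∏ i, M.transpose (σ i) i)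
      ≤ ∑ σ : Equiv.Perm S, nu (Equiv.Perm.sign σ • ∏ i, M.transpose (σ i) i) :=
        nu_sum_le _ _
    _ = ∑ σ : Equiv.Perm S, nu (∏ i, M i (σ i)) := by
        refine Finset.sum_congr rfl fun σ _ => ?_
        rw [nu_zsmul_sign]; rfl
    _ ≤ ∑ σ : Equiv.Perm S, ∏ i, nu (M i (σ i)) :=
        Finset.sum_le_sum fun σ _ => nu_prod_le _ _
    _ ≤ ∏ i, ∑ j, nu (M i j) := perm_sum_le _ (fun _ _ => nu_nonneg _)

/-- degree of determinant bounded by sum of columnwise degree bounds -/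
lemma natDegree_det_le {S : Type*} [Fintype S] [DecidableEq S] (M : Matrix S S ℝ[X])
    (d : S → ℕ) (h : ∀ i j, (M j i).natDegree ≤ d i) :
    M.det.natDegree ≤ ∑ i, d i := by
  rw [Matrix.det_apply]
  refine Polynomial.natDegree_sum_le_of_forall_le _ _ fun σ _ => ?_
  have hp : (∏ i, M (σ i) i).natDegree ≤ ∑ i, d i :=
    (Polynomial.natDegree_prod_le _ _).trans (Finset.sum_le_sum fun i _ => h i (σ i))
  rcases Int.units_eq_one_or (Equiv.Perm.sign σ) with hs | hs <;> rw [hs] <;>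
    simpa using hp

lemma det_updateColumn_sum' {S : Type*} [Fintype S] [DecidableEq S] {ι : Type*}
    (A : Matrix S S ℝ[X]) (s : S) (t : Finset ι) (f : ι → S → ℝ[X]) :
    (A.updateCol s (fun i => ∑ j ∈ t, f j i)).det
      = ∑ j ∈ t, (A.updateCol s (f j)).det := by
  induction t using Finset.cons_induction with
  | empty =>
      rw [Finset.sum_empty]
      refine Matrix.det_eq_zero_of_column_eq_zero s fun i => ?_
      simp [Matrix.updateCol_self]
  | cons a t ha ih =>
      simp only [Finset.sum_cons]
      rw [← ih, ← Matrix.det_updateCol_add]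
      congr 1
noncomputable section
open Polynomial Matrix

def intPolySet : Subring ℝ[X] := (Polynomial.mapRingHom (Int.castRingHom ℝ)).range

lemma coeff_int_of_mem {p : ℝ[X]} (hp : p ∈ intPolySet) (k : ℕ) :
    ∃ z : ℤ, p.coeff k = z := by
  obtain ⟨q, rfl⟩ := hp
  exact ⟨q.coeff k, by simp [Polynomial.coeff_map]⟩

lemma C_int_mem (z : ℤ) : C ((z : ℝ)) ∈ intPolySet :=
  ⟨C z, by simp⟩

lemma X_mem_intPolySet : (X : ℝ[X]) ∈ intPolySet :=
  ⟨X, by simp⟩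

lemma det_mem_intPolySet {S : Type*} [Fintype S] [DecidableEq S]
    {M : Matrix S S ℝ[X]} (h : ∀ i j, M i j ∈ intPolySet) :
    M.det ∈ intPolySet := by
  rw [Matrix.det_apply]
  refine Subring.sum_mem _ fun σ _ => ?_
  exact Subring.zsmul_mem _ (Subring.prod_mem _ fun i _ => h _ _) _

lemma nu_linear_le (a b : ℝ) : nu (C a - X * C b) ≤ |a| + |b| := by
  refine (nu_sub_le _ _).trans ?_
  have h1 : nu (X * C b) ≤ |b| := by
    have : (X : ℝ[X]) * C b = C b * X ^ 1 := by ring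
    rw [this]
    exact (nu_mul_X_pow _ 1).trans_eq (nu_C b)
  have h2 := nu_C a
  linarith

/-- the scaled matrix `m • (I - X P_π)` -/
def Ghat {S A : Type*} [Fintype S] [DecidableEq S] (P : S → A → S → ℝ) (π : S → A)
    (m : ℕ) : Matrix S S ℝ[X] :=
  (C (m : ℝ)) • ((1 : Matrix S S ℝ[X]) - (X : ℝ[X]) • (policyMatrix P π).map C)

lemma Ghat_apply {S A : Type*} [Fintype S] [DecidableEq S] (P : S → A → S → ℝ)
    (π : S → A) (m : ℕ) (i j : S) :
    Ghat P π m i j = C (if i = j then (m : ℝ) else 0) - X * C ((m : ℝ) * P i (π i) j) := by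
  by_cases h : i = j <;>
    simp [Ghat, Matrix.smul_apply, Matrix.sub_apply, Matrix.one_apply,
      Matrix.map_apply, policyMatrix, h, smul_eq_mul] <;> ring

lemma det_Ghat {S A : Type*} [Fintype S] [DecidableEq S] (P : S → A → S → ℝ)
    (π : S → A) (m : ℕ) :
    (Ghat P π m).det = C ((m : ℝ) ^ Fintype.card S) * polyD P π := by
  rw [Ghat, Matrix.det_smul, polyD, map_pow]

lemma smul_updateCol_det {S : Type*} [Fintype S] [DecidableEq S]
    (M : Matrix S S ℝ[X]) (s : S) (v : S → ℝ[X]) (c : ℝ[X]) :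
    ((c • M).updateCol s (fun i => c * v i)).det
      = c ^ Fintype.card S * (M.updateCol s v).det := by
  have : (c • M).updateCol s (fun i => c * v i) = c • (M.updateCol s v) := by
    ext i j
    by_cases h : j = s <;>
      simp [Matrix.updateCol_apply, Matrix.smul_apply, h, smul_eq_mul]
  rw [this, Matrix.det_smul]

lemma det_Bhat {S A : Type*} [Fintype S] [DecidableEq S] (r : S → A → ℝ)
    (P : S → A → S → ℝ) (π : S → A) (m : ℕ) (s : S) :
    ((Ghat P π m).updateCol s (fun i => C ((m : ℝ) * policyReward r π i))).det
      = C ((m : ℝ) ^ Fintype.card S) * polyN r P π s := by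
  have h : (fun i => C ((m : ℝ) * policyReward r π i))
      = fun i => C (m : ℝ) * C (policyReward r π i) := by
    funext i; rw [_root_.map_mul]
  rw [h, Ghat, smul_updateCol_det, polyN, map_pow]
lemma Ghat_mem_int {S A : Type*} [Fintype S] [DecidableEq S]
    {P : S → A → S → ℝ} {m : ℕ} (hm : 1 ≤ m)
    (hP : ∀ s a s', ∃ k : ℕ, k ≤ m ∧ P s a s' = (k : ℝ) / m) (π : S → A) (i j : S) :
    Ghat P π m i j ∈ intPolySet := by
  obtain ⟨k, _, hk⟩ := hP i (π i) j
  have hmP : (m : ℝ) * P i (π i) j = ((k : ℤ) : ℝ) := by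
    rw [hk]
    have hm0 : (m : ℝ) ≠ 0 := by positivity
    field_simp
    norm_cast
  have hif : (if i = j then (m : ℝ) else 0)
      = (((if i = j then (m : ℤ) else 0) : ℤ) : ℝ) := by split <;> simp
  rw [Ghat_apply, hmP, hif]
  exact Subring.sub_mem _ (C_int_mem _)
    (Subring.mul_mem _ X_mem_intPolySet (C_int_mem _))

lemma Ghat_entry_nu {S A : Type*} [Fintype S] [DecidableEq S]
    {P : S → A → S → ℝ} (hP0 : ∀ s a s', 0 ≤ P s a s') (π : S → A) (m : ℕ) (i j : S) :
    nu (Ghat P π m i j) ≤ (if i = j then (m : ℝ) else 0) + (m : ℝ) * P i (π i) j := by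
  rw [Ghat_apply]
  refine (nu_linear_le _ _).trans ?_
  have h1 : |if i = j then (m : ℝ) else 0| = if i = j then (m : ℝ) else 0 := by
    split <;> simp
  have h2 : |(m : ℝ) * P i (π i) j| = (m : ℝ) * P i (π i) j :=
    abs_of_nonneg (mul_nonneg (Nat.cast_nonneg m) (hP0 _ _ _))
  rw [h1, h2]

lemma rowsum_aux {S A : Type*} [Fintype S] [DecidableEq S]
    {P : S → A → S → ℝ} (hP1 : ∀ s a, ∑ s', P s a s' = 1) (π : S → A) (m : ℕ) (i : S) :
    ∑ j, ((if i = j then (m : ℝ) else 0) + (m : ℝ) * P i (π i) j) = 2 * m := by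
  rw [Finset.sum_add_distrib, Finset.sum_ite_eq, ← Finset.mul_sum, hP1]
  simp
  ring

lemma nu_det_Ghat_le {S A : Type*} [Fintype S] [DecidableEq S]
    {P : S → A → S → ℝ} (hP0 : ∀ s a s', 0 ≤ P s a s')
    (hP1 : ∀ s a, ∑ s', P s a s' = 1) (π : S → A) (m : ℕ) :
    nu (Ghat P π m).det ≤ (2 * m) ^ Fintype.card S := by
  refine (nu_det_le _).trans ?_
  calc ∏ i, ∑ j, nu (Ghat P π m i j)
      ≤ ∏ i : S, (2 * (m:ℝ)) := by
        refine Finset.prod_le_prod (fun i _ => Finset.sum_nonneg fun j _ => nu_nonneg _)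
          (fun i _ => ?_)
        calc ∑ j, nu (Ghat P π m i j)
            ≤ ∑ j, ((if i = j then (m : ℝ) else 0) + (m : ℝ) * P i (π i) j) :=
              Finset.sum_le_sum fun j _ => Ghat_entry_nu hP0 π m i j
          _ = 2 * m := rowsum_aux hP1 π m i
    _ = (2 * m) ^ Fintype.card S := by rw [Finset.prod_const, Finset.card_univ]
lemma nu_det_Bhat_le {S A : Type*} [Fintype S] [DecidableEq S]
    {r : S → A → ℝ} {P : S → A → S → ℝ} {m rinf : ℕ}
    (hP0 : ∀ s a s', 0 ≤ P s a s') (hP1 : ∀ s a, ∑ s', P s a s' = 1)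
    (π : S → A) (s : S) (q : S → ℤ)
    (hq : ∀ i, (m : ℝ) * policyReward r π i = (q i : ℝ))
    (hq2 : ∀ i, |q i| ≤ (rinf : ℤ)) :
    nu ((Ghat P π m).updateCol s (fun i => C ((m : ℝ) * policyReward r π i))).det
      ≤ Fintype.card S * rinf * (2 * m) ^ (Fintype.card S - 1) := by
  set G := Ghat P π m with hG
  set f : S → S → ℝ[X] := fun i k => C ((q i : ℝ)) • (Pi.single i (1 : ℝ[X]) : S → ℝ[X]) k with hf
  have hcol : (fun i => C ((m : ℝ) * policyReward r π i)) = fun k => ∑ i, f i k := by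
    funext k
    rw [hq k]
    simp only [hf, Pi.single_apply, smul_eq_mul, mul_ite, mul_one, mul_zero]
    rw [Finset.sum_ite_eq]
    simp
  rw [hcol, det_updateColumn_sum']
  -- E i : column s replaced by unit vector e_i
  set E : S → Matrix S S ℝ[X] := fun i => G.updateCol s (Pi.single i (1 : ℝ[X]))
    with hE
  have hdet1 : ∀ i, (G.updateCol s (f i)).det = C ((q i : ℝ)) * (E i).det := by
    intro i
    have : f i = fun k => C ((q i : ℝ)) • (Pi.single i (1 : ℝ[X]) : S → ℝ[X]) k := rfl
    rw [this]
    have := Matrix.det_updateCol_smul G s (C ((q i : ℝ))) (Pi.single i (1 : ℝ[X]))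
    exact this
  -- row operation : det (E i) = det (F i) where row i is replaced by e_s
  set F : S → Matrix S S ℝ[X] := fun i => (E i).updateRow i (Pi.single s (1 : ℝ[X]))
    with hF
  have hdet2 : ∀ i, (E i).det = (F i).det := by
    intro i
    have hsplit : E i i = Pi.single s (1 : ℝ[X]) + (E i i - Pi.single s 1) := by abel
    have h1 : (E i).det = ((E i).updateRow i (E i i)).det := by
      rw [Matrix.updateRow_eq_self]
    rw [h1, hsplit, Matrix.det_updateRow_add]
    have h2 : ((E i).updateRow i (E i i - Pi.single s 1)).det = 0 := by
      refine Matrix.det_eq_zero_of_column_eq_zero s fun k => ?_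
      by_cases hk : k = i
      · subst hk
        rw [Matrix.updateRow_self]
        have : E k k s = 1 := by
          rw [hE]
          simp [Matrix.updateCol_self, Pi.single_apply]
        simp [this]
      · rw [Matrix.updateRow_ne hk, hE]
        simp [Matrix.updateCol_self, Pi.single_apply, hk]
    rw [h2, add_zero, hF]
  -- nu bound on det (F i)
  have hnuF : ∀ i, nu (F i).det ≤ (2 * m) ^ (Fintype.card S - 1) := by
    intro i
    refine (nu_det_le _).trans ?_
    have hrow : ∀ k, ∑ j, nu (F i k j) ≤ (if k = i then (1:ℝ) else 2 * (m:ℝ)) := by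
      intro k
      by_cases hk : k = i
      · rw [if_pos hk]
        have hthis : ∀ j, nu (F i k j) = if j = s then 1 else 0 := by
          intro j
          have h0 : F i k j = (Pi.single s (1 : ℝ[X]) : S → ℝ[X]) j := by
            rw [hF, hk]
            exact congrFun (Matrix.updateRow_self) j
          rw [h0, Pi.single_apply]
          split <;> simp [nu_one, nu_zero]
        rw [Finset.sum_congr rfl fun j _ => hthis j, Finset.sum_ite_eq']
        simp
      · rw [if_neg hk]
        have hFE : ∀ j, F i k j = E i k j := fun j => by
          rw [hF]
          exact congrFun (Matrix.updateRow_ne hk) j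
        have hbd : ∀ j, nu (F i k j)
            ≤ (if k = j then (m : ℝ) else 0) + (m : ℝ) * P k (π k) j := by
          intro j
          by_cases hj : j = s
          · have h0 : E i k j = 0 := by
              rw [hE, hj]
              simp [Matrix.updateCol_self, Pi.single_apply, hk]
            rw [hFE j, h0, nu_zero]
            have hnn1 : (0:ℝ) ≤ if k = j then (m : ℝ) else 0 := by
              split <;> positivity
            have hnn2 : (0:ℝ) ≤ (m : ℝ) * P k (π k) j :=
              mul_nonneg (Nat.cast_nonneg m) (hP0 _ _ _)
            linarith
          · have h1 : E i k j = G k j := by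
              simp only [hE]
              exact Matrix.updateCol_ne hj
            rw [hFE j, h1, hG]
            exact Ghat_entry_nu hP0 π m k j
        calc ∑ j, nu (F i k j)
            ≤ ∑ j, ((if k = j then (m : ℝ) else 0) + (m : ℝ) * P k (π k) j) :=
              Finset.sum_le_sum fun j _ => hbd j
          _ = 2 * m := rowsum_aux hP1 π m k
    calc ∏ k, ∑ j, nu (F i k j)
        ≤ ∏ k, (if k = i then 1 else 2 * (m:ℝ)) := by
          refine Finset.prod_le_prod (fun k _ => Finset.sum_nonneg fun j _ => nu_nonneg _)
            (fun k _ => hrow k)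
      _ = (2 * m) ^ (Fintype.card S - 1) := by
          rw [← Finset.mul_prod_erase _ _ (Finset.mem_univ i), if_pos rfl, one_mul]
          rw [Finset.prod_congr rfl (fun k hk => if_neg (Finset.ne_of_mem_erase hk)),
            Finset.prod_const, Finset.card_erase_of_mem (Finset.mem_univ i),
            Finset.card_univ]
  -- assemble
  calc nu (∑ i, (G.updateCol s (f i)).det)
      ≤ ∑ i, nu ((G.updateCol s (f i)).det) := nu_sum_le _ _
    _ ≤ ∑ i : S, (rinf : ℝ) * (2 * m) ^ (Fintype.card S - 1) := by
        refine Finset.sum_le_sum fun i _ => ?_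
        rw [hdet1 i, hdet2 i]
        refine (nu_C_mul_le _ _).trans ?_
        have h1 : |(q i : ℝ)| ≤ (rinf : ℝ) := by
          rw [← Int.cast_abs]
          exact_mod_cast hq2 i
        have h2 := hnuF i
        have h3 := nu_nonneg (F i).det
        have h4 : (0:ℝ) ≤ |(q i : ℝ)| := abs_nonneg _
        nlinarith
    _ = Fintype.card S * rinf * (2 * m) ^ (Fintype.card S - 1) := by
        rw [Finset.sum_const, Finset.card_univ, nsmul_eq_mul]
        ring
lemma base_apply {S A : Type*} [Fintype S] [DecidableEq S] (P : S → A → S → ℝ)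
    (π : S → A) (i j : S) :
    ((1 : Matrix S S ℝ[X]) - (X : ℝ[X]) • (policyMatrix P π).map C) i j
      = (if i = j then 1 else 0) - X * C (P i (π i) j) := by
  by_cases h : i = j <;>
    simp [Matrix.sub_apply, Matrix.smul_apply, Matrix.one_apply, Matrix.map_apply,
      policyMatrix, h, smul_eq_mul]

lemma base_natDegree_le {S A : Type*} [Fintype S] [DecidableEq S] (P : S → A → S → ℝ)
    (π : S → A) (i j : S) :
    (((1 : Matrix S S ℝ[X]) - (X : ℝ[X]) • (policyMatrix P π).map C) i j).natDegree ≤ 1 := by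
  rw [base_apply]
  refine (Polynomial.natDegree_sub_le _ _).trans ?_
  rw [max_le_iff]
  constructor
  · split <;> simp
  · refine (Polynomial.natDegree_mul_le).trans ?_
    simp [Polynomial.natDegree_X]

lemma natDegree_polyD_le {S A : Type*} [Fintype S] [DecidableEq S]
    (P : S → A → S → ℝ) (π : S → A) :
    (polyD P π).natDegree ≤ Fintype.card S := by
  rw [polyD]
  have := natDegree_det_le
    ((1 : Matrix S S ℝ[X]) - (X : ℝ[X]) • (policyMatrix P π).map C)
    (fun _ => 1) (fun i j => base_natDegree_le P π j i)
  simpa [Finset.card_univ] using this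

lemma natDegree_polyN_le {S A : Type*} [Fintype S] [DecidableEq S]
    (r : S → A → ℝ) (P : S → A → S → ℝ) (π : S → A) (s : S) :
    (polyN r P π s).natDegree ≤ Fintype.card S - 1 := by
  rw [polyN]
  have h := natDegree_det_le
    ((((1 : Matrix S S ℝ[X]) - (X : ℝ[X]) • (policyMatrix P π).map C)).updateCol s
      fun i => C (policyReward r π i))
    (fun i => if i = s then 0 else 1) (fun i j => ?_)
  · refine h.trans ?_
    rw [← Finset.add_sum_erase _ _ (Finset.mem_univ s), if_pos rfl,
      Finset.sum_congr rfl (fun k hk => if_neg (Finset.ne_of_mem_erase hk)),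
      Finset.sum_const, Finset.card_erase_of_mem (Finset.mem_univ s), Finset.card_univ]
    simp
  · show _ ≤ if i = s then 0 else 1
    by_cases hi : i = s
    · rw [hi, Matrix.updateCol_self, if_pos rfl]
      simp
    · rw [Matrix.updateCol_ne hi, if_neg hi]
      exact base_natDegree_le P π j i
/-- Under Assumption R (rational data with common denominator `m` and reward numerators
bounded by `r∞`), the polynomial `p = N_{s,π} D_{π'} - N_{s,π'} D_π` has degree at most
`2|S| - 1`, `m^{2|S|} • p` has integer coefficients, and the sum of the absolute values of
the coefficients of `m^{2|S|} • p` is at most `L = 2 |S| r∞ m^{2|S|} 4^{|S|}`. -/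
theorem poly_p_degree_int_coeffs_sum_bound {S A : Type*} [Fintype S] [DecidableEq S]
    [Nonempty S] [Fintype A] [Nonempty A]
    (r : S → A → ℝ) (P : S → A → S → ℝ) (m rinf : ℕ) (hm : 1 ≤ m)
    (hP : ∀ s a s', ∃ k : ℕ, k ≤ m ∧ P s a s' = (k : ℝ) / m)
    (hP0 : ∀ s a s', 0 ≤ P s a s') (hP1 : ∀ s a, ∑ s', P s a s' = 1)
    (hr : ∀ s a, ∃ q : ℤ, r s a = (q : ℝ) / m ∧ |q| ≤ (rinf : ℤ))
    (π π' : S → A) (s : S) :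
    (polyN r P π s * polyD P π' - polyN r P π' s * polyD P π).natDegree ≤
        2 * Fintype.card S - 1 ∧
    (∀ k : ℕ, ∃ z : ℤ,
      (m : ℝ) ^ (2 * Fintype.card S) *
        (polyN r P π s * polyD P π' - polyN r P π' s * polyD P π).coeff k = z) ∧
    (∑ k ∈ (C ((m : ℝ) ^ (2 * Fintype.card S)) *
          (polyN r P π s * polyD P π' - polyN r P π' s * polyD P π)).support,
        |(C ((m : ℝ) ^ (2 * Fintype.card S)) *
          (polyN r P π s * polyD P π' - polyN r P π' s * polyD P π)).coeff k| ≤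
      2 * Fintype.card S * rinf * (m : ℝ) ^ (2 * Fintype.card S) * 4 ^ Fintype.card S) := by
  classical
  have hn : 1 ≤ Fintype.card S := Fintype.card_pos
  set n := Fintype.card S with hncard
  have hm0 : (m : ℝ) ≠ 0 := by positivity
  -- choose integer reward numerators
  choose qf hqf1 hqf2 using fun i => hr i (π i)
  choose qf' hqf1' hqf2' using fun i => hr i (π' i)
  have hq : ∀ i, (m : ℝ) * policyReward r π i = ((qf i : ℤ) : ℝ) := by
    intro i; rw [policyReward, hqf1 i]; field_simp
  have hq' : ∀ i, (m : ℝ) * policyReward r π' i = ((qf' i : ℤ) : ℝ) := by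
    intro i; rw [policyReward, hqf1' i]; field_simp
  -- scaled determinant identities
  have hDA := det_Ghat P π' m
  have hDB := det_Ghat P π m
  have hNA := det_Bhat r P π m s
  have hNB := det_Bhat r P π' m s
  have hm2 : ((m:ℝ)) ^ (2 * n) = (m:ℝ) ^ n * (m:ℝ) ^ n := by
    rw [two_mul, pow_add]
  have hQ : C ((m:ℝ) ^ (2 * n)) * (polyN r P π s * polyD P π' - polyN r P π' s * polyD P π)
      = ((Ghat P π m).updateCol s (fun i => C ((m : ℝ) * policyReward r π i))).det
          * (Ghat P π' m).det
        - ((Ghat P π' m).updateCol s (fun i => C ((m : ℝ) * policyReward r π' i))).det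
          * (Ghat P π m).det := by
    rw [hNA, hNB, hDA, hDB, hm2, Polynomial.C_mul]
    ring
  refine ⟨?_, ?_, ?_⟩
  · -- degree bound
    refine (Polynomial.natDegree_sub_le _ _).trans ?_
    rw [max_le_iff]
    constructor
    · refine (Polynomial.natDegree_mul_le).trans ?_
      have h1 := natDegree_polyN_le r P π s
      have h2 := natDegree_polyD_le P π'
      omega
    · refine (Polynomial.natDegree_mul_le).trans ?_
      have h1 := natDegree_polyN_le r P π' s
      have h2 := natDegree_polyD_le P π
      omega
  · -- integer coefficients
    intro k
    have hmem : C ((m:ℝ) ^ (2 * n)) *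
        (polyN r P π s * polyD P π' - polyN r P π' s * polyD P π) ∈ intPolySet := by
      rw [hQ]
      have hGmem : ∀ (ρ : S → A) (i j : S), Ghat P ρ m i j ∈ intPolySet :=
        fun ρ i j => Ghat_mem_int hm hP ρ i j
      have hBmem : ∀ (ρ : S → A) (qg : S → ℤ)
          (hqg : ∀ i, (m : ℝ) * policyReward r ρ i = ((qg i : ℤ) : ℝ)) (i j : S),
          ((Ghat P ρ m).updateCol s (fun i => C ((m : ℝ) * policyReward r ρ i))) i j
            ∈ intPolySet := by
        intro ρ qg hqg i j
        by_cases hj : j = s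
        · rw [hj, Matrix.updateCol_self, hqg i]
          exact C_int_mem _
        · rw [Matrix.updateCol_ne hj]
          exact hGmem ρ i j
      exact Subring.sub_mem _
        (Subring.mul_mem _ (det_mem_intPolySet (hBmem π qf hq))
          (det_mem_intPolySet (hGmem π')))
        (Subring.mul_mem _ (det_mem_intPolySet (hBmem π' qf' hq'))
          (det_mem_intPolySet (hGmem π)))
    obtain ⟨z, hz⟩ := coeff_int_of_mem hmem k
    exact ⟨z, by rw [← hz, Polynomial.coeff_C_mul]⟩
  · -- coefficient sum bound
    show nu (C ((m:ℝ) ^ (2 * n)) *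
      (polyN r P π s * polyD P π' - polyN r P π' s * polyD P π)) ≤ _
    rw [hQ]
    have hb1 := nu_det_Bhat_le (rinf := rinf) hP0 hP1 π s qf hq hqf2
    have hb2 := nu_det_Bhat_le (rinf := rinf) hP0 hP1 π' s qf' hq' hqf2'
    have hg1 := nu_det_Ghat_le hP0 hP1 π m
    have hg2 := nu_det_Ghat_le hP0 hP1 π' m
    have key : (2 * (m:ℝ)) ^ (n - 1) * (2 * (m:ℝ)) ^ n ≤ (m:ℝ) ^ (2 * n) * 4 ^ n := by
      rw [← pow_add]
      have h1 : n - 1 + n = 2 * n - 1 := by omega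
      rw [h1, mul_pow]
      have h2 : (2:ℝ) ^ (2 * n - 1) ≤ 2 ^ (2 * n) :=
        pow_le_pow_right₀ (by norm_num) (by omega)
      have h3 : (m:ℝ) ^ (2 * n - 1) ≤ (m:ℝ) ^ (2 * n) :=
        pow_le_pow_right₀ (by exact_mod_cast hm) (by omega)
      have h4 : (4:ℝ) ^ n = 2 ^ (2 * n) := by
        rw [show (4:ℝ) = 2 ^ 2 by norm_num, ← pow_mul]
      rw [h4]
      have h5 : (0:ℝ) ≤ 2 ^ (2 * n - 1) := by positivity
      have h6 : (0:ℝ) ≤ (m:ℝ) ^ (2 * n - 1) := by positivity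
      calc (2:ℝ) ^ (2 * n - 1) * (m:ℝ) ^ (2 * n - 1)
          ≤ 2 ^ (2 * n) * (m:ℝ) ^ (2 * n) := by
            exact mul_le_mul h2 h3 h6 (by positivity)
        _ = (m:ℝ) ^ (2 * n) * 2 ^ (2 * n) := by ring
    set NA := ((Ghat P π m).updateCol s
      (fun i => C ((m : ℝ) * policyReward r π i))).det
    set NB := ((Ghat P π' m).updateCol s
      (fun i => C ((m : ℝ) * policyReward r π' i))).det
    set DA := (Ghat P π' m).det
    set DB := (Ghat P π m).det
    have step1 : nu (NA * DA - NB * DB) ≤ nu NA * nu DA + nu NB * nu DB :=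
      (nu_sub_le _ _).trans (add_le_add (nu_mul_le _ _) (nu_mul_le _ _))
    have hNAnn := nu_nonneg NA
    have hNBnn := nu_nonneg NB
    have hDAnn := nu_nonneg DA
    have hDBnn := nu_nonneg DB
    have hc1 : (0:ℝ) ≤ (n : ℝ) * rinf := by positivity
    have hpow1 : (0:ℝ) ≤ (2 * (m:ℝ)) ^ (n - 1) := by positivity
    have hpow2 : (0:ℝ) ≤ (2 * (m:ℝ)) ^ n := by positivity
    have hcast1 : ((n * rinf * (2 * m) ^ (n - 1) : ℕ) : ℝ)
        = (n : ℝ) * rinf * (2 * (m:ℝ)) ^ (n - 1) := by push_cast; ring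
    have big : nu NA * nu DA + nu NB * nu DB
        ≤ 2 * ((n:ℝ) * rinf * ((2 * (m:ℝ)) ^ (n - 1) * (2 * (m:ℝ)) ^ n)) := by
      have e1 : nu NA * nu DA
          ≤ ((n:ℝ) * rinf * (2 * (m:ℝ)) ^ (n - 1)) * (2 * (m:ℝ)) ^ n := by
        refine mul_le_mul ?_ ?_ hDAnn (by positivity)
        · calc nu NA ≤ _ := hb1
            _ = (n:ℝ) * rinf * (2 * (m:ℝ)) ^ (n - 1) := by push_cast; ring
        · calc nu DA ≤ _ := hg2
            _ = (2 * (m:ℝ)) ^ n := by push_cast; ring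
      have e2 : nu NB * nu DB
          ≤ ((n:ℝ) * rinf * (2 * (m:ℝ)) ^ (n - 1)) * (2 * (m:ℝ)) ^ n := by
        refine mul_le_mul ?_ ?_ hDBnn (by positivity)
        · calc nu NB ≤ _ := hb2
            _ = (n:ℝ) * rinf * (2 * (m:ℝ)) ^ (n - 1) := by push_cast; ring
        · calc nu DB ≤ _ := hg1
            _ = (2 * (m:ℝ)) ^ n := by push_cast; ring
      nlinarith
    calc nu (NA * DA - NB * DB) ≤ nu NA * nu DA + nu NB * nu DB := step1
      _ ≤ 2 * ((n:ℝ) * rinf * ((2 * (m:ℝ)) ^ (n - 1) * (2 * (m:ℝ)) ^ n)) := big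
      _ ≤ 2 * ((n:ℝ) * rinf * ((m:ℝ) ^ (2 * n) * 4 ^ n)) := by nlinarith
      _ = 2 * (n:ℝ) * rinf * (m:ℝ) ^ (2 * n) * 4 ^ n := by ring
end
end

section
/- Let the MDP (S, A, r, P) satisfy Assumption R with parameters m and r∞, and let π, π' be policies and s ∈ S a state such that the map γ ↦ v^π_{γ,s} − v^{π'}_{γ,s} is not identically zero on [0,1). Then every γ̂ ∈ [0,1) with v^π_{γ̂,s} = v^{π'}_{γ̂,s} satisfies γ̂ < 1 − η(M), where N = 2|S| − 1, L = 2·|S|·r∞·m^{2|S|}·4^{|S|}, and η(M) = 1/(2·N^{N/2+2}·(L+1)^N). -/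
open Matrix

section CPproof

open Polynomial Matrix Finset

namespace CPaux

/-- degree ≤ D and all coefficients bounded by c in absolute value -/
def Bnd (p : Polynomial ℤ) (D : ℕ) (c : ℤ) : Prop :=
  p.natDegree ≤ D ∧ ∀ k, |p.coeff k| ≤ c

lemma Bnd.nonneg {p D c} (h : Bnd p D c) : 0 ≤ c :=
  le_trans (abs_nonneg _) (h.2 0)

lemma bnd_mono {p D c D' c'} (h : Bnd p D c) (hD : D ≤ D') (hc : c ≤ c') : Bnd p D' c' :=
  ⟨h.1.trans hD, fun k => (h.2 k).trans hc⟩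

lemma bnd_one : Bnd 1 0 1 := by
  refine ⟨by simp, fun k => ?_⟩
  rw [Polynomial.coeff_one]
  split <;> simp

lemma bnd_C (a : ℤ) (c : ℤ) (ha : |a| ≤ c) : Bnd (C a) 0 c := by
  refine ⟨by simp, fun k => ?_⟩
  rw [Polynomial.coeff_C]
  split
  · exact ha
  · simpa using le_trans (abs_nonneg a) ha

lemma bnd_add {p q D c e} (hp : Bnd p D c) (hq : Bnd q D e) : Bnd (p + q) D (c + e) := by
  refine ⟨le_trans (Polynomial.natDegree_add_le _ _) (by simp [hp.1, hq.1]), fun k => ?_⟩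
  rw [Polynomial.coeff_add]
  exact le_trans (abs_add_le _ _) (add_le_add (hp.2 k) (hq.2 k))

lemma bnd_sub {p q D c e} (hp : Bnd p D c) (hq : Bnd q D e) : Bnd (p - q) D (c + e) := by
  refine ⟨le_trans (Polynomial.natDegree_sub_le _ _) (by simp [hp.1, hq.1]), fun k => ?_⟩
  rw [Polynomial.coeff_sub]
  exact le_trans (abs_sub _ _) (add_le_add (hp.2 k) (hq.2 k))

lemma bnd_zsmul {p D c} (z : ℤ) (hz : |z| ≤ 1) (h : Bnd p D c) : Bnd (z • p) D c := by
  refine ⟨le_trans (Polynomial.natDegree_smul_le _ _) h.1, fun k => ?_⟩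
  rw [Polynomial.coeff_smul, smul_eq_mul, abs_mul]
  calc |z| * |p.coeff k| ≤ 1 * c :=
        mul_le_mul hz (h.2 k) (abs_nonneg _) zero_le_one
  _ = c := one_mul c

lemma bnd_zero (c : ℤ) (hc : 0 ≤ c) (D : ℕ) : Bnd 0 D c := ⟨by simp, by simpa using hc⟩

lemma bnd_sum {ι : Type*} [DecidableEq ι] (t : Finset ι) (f : ι → Polynomial ℤ) (D : ℕ) (c : ℤ)
    (hc : 0 ≤ c) (h : ∀ i ∈ t, Bnd (f i) D c) :
    Bnd (∑ i ∈ t, f i) D (t.card * c) := by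
  induction t using Finset.induction with
  | empty =>
    rw [Finset.sum_empty, Finset.card_empty]
    exact ⟨by simp, by simp⟩
  | @insert a t' hnot ih =>
    rw [Finset.sum_insert hnot, Finset.card_insert_of_notMem hnot]
    have h2 := ih (fun i hi => h i (mem_insert_of_mem hi))
    have := bnd_add (h a (mem_insert_self _ _)) h2
    refine bnd_mono this le_rfl (le_of_eq (by push_cast; ring))

/-- key multiplication bound -/
lemma bnd_mul {p q D₁ D₂ c e} (hp : Bnd p D₁ c) (hq : Bnd q D₂ e) :
    Bnd (p * q) (D₁ + D₂) ((D₁ + 1) * (c * e)) := by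
  have hce : 0 ≤ c * e := mul_nonneg hp.nonneg hq.nonneg
  refine ⟨le_trans (Polynomial.natDegree_mul_le) (by simp [hp.1, hq.1, add_le_add]), fun k => ?_⟩
  rw [Polynomial.coeff_mul]
  calc |∑ x ∈ Finset.HasAntidiagonal.antidiagonal k, p.coeff x.1 * q.coeff x.2|
      ≤ ∑ x ∈ Finset.HasAntidiagonal.antidiagonal k, |p.coeff x.1 * q.coeff x.2| :=
        Finset.abs_sum_le_sum_abs _ _
    _ ≤ ∑ x ∈ Finset.HasAntidiagonal.antidiagonal k, (if x.1 ≤ D₁ then c * e else 0) := by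
        apply Finset.sum_le_sum
        intro x hx
        by_cases hx1 : x.1 ≤ D₁
        · simp only [hx1, if_true, abs_mul]
          exact mul_le_mul (hp.2 _) (hq.2 _) (abs_nonneg _) hp.nonneg
        · simp only [hx1, if_false]
          have : p.coeff x.1 = 0 :=
            Polynomial.coeff_eq_zero_of_natDegree_lt (lt_of_le_of_lt hp.1 (by omega))
          simp [this]
    _ = ((Finset.HasAntidiagonal.antidiagonal k).filter (fun x => x.1 ≤ D₁)).card * (c * e) := by
        rw [Finset.sum_ite, Finset.sum_const, Finset.sum_const_zero, add_zero, nsmul_eq_mul]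
    _ ≤ (D₁ + 1) * (c * e) := by
        apply mul_le_mul_of_nonneg_right _ hce
        have hcard : ((Finset.HasAntidiagonal.antidiagonal k).filter (fun x => x.1 ≤ D₁)).card ≤
            (Finset.range (D₁ + 1)).card := by
          apply Finset.card_le_card_of_injOn (fun x => x.1)
          · intro x hx
            simp only [Finset.mem_coe, Finset.mem_filter] at hx
            simp [Nat.lt_succ_iff, hx.2]
          · intro x hx y hy hxy
            simp only [Finset.mem_coe, Finset.mem_filter, Finset.HasAntidiagonal.mem_antidiagonal] at hx hy
            have h1 : x.1 = y.1 := hxy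
            exact Prod.ext h1 (by omega)
        rw [Finset.card_range] at hcard
        exact_mod_cast hcard

lemma bnd_prod_linear {ι : Type*} [DecidableEq ι] (t : Finset ι) (f : ι → Polynomial ℤ)
    (c : ℤ) (h : ∀ i ∈ t, Bnd (f i) 1 c) :
    Bnd (∏ i ∈ t, f i) t.card ((2 * c) ^ t.card) := by
  induction t using Finset.induction with
  | empty => simpa using bnd_one
  | @insert a t' hnot ih =>
    rw [Finset.prod_insert hnot, Finset.card_insert_of_notMem hnot]
    have h2 := ih (fun i hi => h i (mem_insert_of_mem hi))
    have := bnd_mul (h a (mem_insert_self _ _)) h2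
    refine bnd_mono this (by omega) (le_of_eq (by ring))


variable {S : Type*} [Fintype S] [DecidableEq S]

lemma perm_sign_abs (σ : Equiv.Perm S) : |((Equiv.Perm.sign σ : ℤˣ) : ℤ)| ≤ 1 := by
  rcases Int.units_eq_one_or (Equiv.Perm.sign σ) with h | h <;> simp [h]

lemma bnd_det (M : Matrix S S (Polynomial ℤ)) (c : ℤ) (hc : 0 ≤ c)
    (h : ∀ i j, Bnd (M i j) 1 c) :
    Bnd M.det (Fintype.card S) ((Fintype.card S).factorial * (2 * c) ^ Fintype.card S) := by
  rw [Matrix.det_apply]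
  have hterm : ∀ σ : Equiv.Perm S,
      Bnd (Equiv.Perm.sign σ • ∏ i, M (σ i) i) (Fintype.card S) ((2 * c) ^ Fintype.card S) := by
    intro σ
    have hp := bnd_prod_linear Finset.univ (fun i => M (σ i) i) c (fun i _ => h _ _)
    rw [Finset.card_univ] at hp
    exact bnd_zsmul _ (perm_sign_abs σ) hp
  have hs := bnd_sum Finset.univ (fun σ : Equiv.Perm S => Equiv.Perm.sign σ • ∏ i, M (σ i) i)
    (Fintype.card S) ((2 * c) ^ Fintype.card S)
    (pow_nonneg (by linarith) _) (fun σ _ => hterm σ)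
  rw [Finset.card_univ, Fintype.card_perm] at hs
  exact_mod_cast hs

/-- determinant bound when one row consists of constants bounded by 1 -/
lemma bnd_det_row_const (M : Matrix S S (Polynomial ℤ)) (j : S) (c : ℤ) (hc : 0 ≤ c)
    (h1 : ∀ i' i, i' ≠ j → Bnd (M i' i) 1 c) (h2 : ∀ i, Bnd (M j i) 0 1) :
    Bnd M.det (Fintype.card S - 1)
      ((Fintype.card S).factorial * (2 * c) ^ (Fintype.card S - 1)) := by
  rw [Matrix.det_apply]
  have hterm : ∀ σ : Equiv.Perm S,
      Bnd (Equiv.Perm.sign σ • ∏ i, M (σ i) i) (Fintype.card S - 1)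
        ((2 * c) ^ (Fintype.card S - 1)) := by
    intro σ
    have hsplit : (∏ i, M (σ i) i) =
        M (σ (σ.symm j)) (σ.symm j) * ∏ i ∈ Finset.univ.erase (σ.symm j), M (σ i) i :=
      (Finset.mul_prod_erase Finset.univ _ (Finset.mem_univ _)).symm
    have hp := bnd_prod_linear (Finset.univ.erase (σ.symm j)) (fun i => M (σ i) i) c
      (fun i hi => by
        apply h1
        intro hσ
        have : i = σ.symm j := by
          apply_fun σ.symm at hσ
          simpa using hσ
        exact (Finset.mem_erase.mp hi).1 this)
    rw [Finset.card_erase_of_mem (Finset.mem_univ _), Finset.card_univ] at hp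
    have hconst : Bnd (M (σ (σ.symm j)) (σ.symm j)) 0 1 := by
      rw [Equiv.apply_symm_apply]; exact h2 _
    have := bnd_mul hconst hp
    rw [hsplit]
    exact bnd_zsmul _ (perm_sign_abs σ)
      (bnd_mono this (by omega) (le_of_eq (by ring)))
  have hs := bnd_sum Finset.univ (fun σ : Equiv.Perm S => Equiv.Perm.sign σ • ∏ i, M (σ i) i)
    _ _ (pow_nonneg (by linarith) _) (fun σ _ => hterm σ)
  rw [Finset.card_univ, Fintype.card_perm] at hs
  exact_mod_cast hs

/-- one division step by (X - 1) -/
lemma bnd_div_step {p q : Polynomial ℤ} {D : ℕ} {e : ℤ}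
    (hfac : p = (X - C 1) * q) (hb : Bnd p D e) : Bnd q D (((D : ℤ) + 1) * e) := by
  have he : 0 ≤ e := hb.nonneg
  by_cases hq0 : q = 0
  · subst hq0
    refine ⟨by simp, fun k => by simp; positivity⟩
  have hdq : q.natDegree ≤ D := by
    have hX : (X - C (1:ℤ)) ≠ 0 := Polynomial.X_sub_C_ne_zero 1
    have hdeg : p.natDegree = 1 + q.natDegree := by
      rw [hfac, Polynomial.natDegree_mul hX hq0, Polynomial.natDegree_X_sub_C]
    have := hb.1
    omega
  have hcoeff : ∀ k, q.coeff k = -∑ j ∈ Finset.range (k + 1), p.coeff j := by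
    have hps : ∀ k, p.coeff k = (X * q).coeff k - q.coeff k := by
      intro k
      have h2 : (X - C (1:ℤ)) * q = X * q - q := by rw [sub_mul, Polynomial.C_1, one_mul]
      rw [hfac, h2, Polynomial.coeff_sub]
    intro k
    induction k with
    | zero =>
      have h0 := hps 0
      rw [Polynomial.mul_coeff_zero, Polynomial.coeff_X_zero, zero_mul] at h0
      simp only [zero_add, Finset.sum_range_one]
      linarith [h0]
    | succ k ih =>
      have h1 := hps (k + 1)
      rw [Polynomial.coeff_X_mul] at h1
      rw [Finset.sum_range_succ]
      linarith [h1, ih]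
  refine ⟨hdq, fun k => ?_⟩
  by_cases hk : k ≤ D
  · rw [hcoeff k, abs_neg]
    calc |∑ j ∈ Finset.range (k + 1), p.coeff j| ≤ ∑ j ∈ Finset.range (k + 1), |p.coeff j| :=
          Finset.abs_sum_le_sum_abs _ _
      _ ≤ ∑ _j ∈ Finset.range (k + 1), e := Finset.sum_le_sum (fun j _ => hb.2 j)
      _ = ((k : ℤ) + 1) * e := by
          rw [Finset.sum_const, Finset.card_range, nsmul_eq_mul]; push_cast; ring
      _ ≤ ((D : ℤ) + 1) * e := by
          apply mul_le_mul_of_nonneg_right _ he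
          have : (k : ℤ) ≤ D := by exact_mod_cast hk
          linarith
  · rw [Polynomial.coeff_eq_zero_of_natDegree_lt (lt_of_le_of_lt hdq (by omega))]
    simp only [abs_zero]
    positivity

lemma bnd_div_pow {g : Polynomial ℤ} {D : ℕ} {c : ℤ} (hb : Bnd g D c) :
    ∀ (t : ℕ) (q : Polynomial ℤ), g = (X - C 1) ^ t * q →
      Bnd q D (((D : ℤ) + 1) ^ t * c) := by
  intro t
  induction t with
  | zero =>
    intro q h
    rw [pow_zero, one_mul] at h
    rw [pow_zero, one_mul]
    exact h ▸ hb
  | succ t ih =>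
    intro q h
    have h' : g = (X - C 1) ^ t * ((X - C 1) * q) := by rw [h, pow_succ]; ring
    have := bnd_div_step rfl (ih _ h')
    refine bnd_mono this le_rfl (le_of_eq (by ring))


/-- Any root in [0,1) of a nonzero integer polynomial with bounded degree and
coefficients is quantitatively separated from 1. -/
lemma gap {g : Polynomial ℤ} (hg : g ≠ 0) {D : ℕ} {c : ℤ} (hb : Bnd g D c)
    {γ : ℝ} (h0 : 0 ≤ γ) (h1 : γ < 1)
    (hroot : Polynomial.eval γ (g.map (Int.castRingHom ℝ)) = 0) :
    1 ≤ ((D : ℝ) * ((D : ℝ) + 1) / 2) * (((D : ℝ) + 1) ^ D * (c : ℝ)) * (1 - γ) := by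
  classical
  set t := g.rootMultiplicity 1 with ht
  set q := g /ₘ (X - C 1) ^ t with hq
  have hfac : (X - C 1) ^ t * q = g := Polynomial.pow_mul_divByMonic_rootMultiplicity_eq g 1
  have h1q : q.eval 1 ≠ 0 := Polynomial.eval_divByMonic_pow_rootMultiplicity_ne_zero 1 hg
  have hbq : Bnd q D (((D : ℤ) + 1) ^ t * c) := bnd_div_pow hb t q hfac.symm
  have htD : t ≤ D := by
    have hdvd : (X - C (1:ℤ)) ^ t ∣ g := ⟨q, hfac.symm⟩
    have := Polynomial.natDegree_le_of_dvd hdvd hg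
    rw [Polynomial.natDegree_pow, Polynomial.natDegree_X_sub_C, mul_one] at this
    exact this.trans hb.1
  -- real versions
  set qR := q.map (Int.castRingHom ℝ) with hqR
  have hmapfac : g.map (Int.castRingHom ℝ) = (X - C (1:ℝ)) ^ t * qR := by
    rw [← hfac]
    simp [Polynomial.map_mul, Polynomial.map_pow, Polynomial.map_sub, hqR]
  have hrootq : qR.eval γ = 0 := by
    rw [hmapfac] at hroot
    simp only [Polynomial.eval_mul, Polynomial.eval_pow, Polynomial.eval_sub,
      Polynomial.eval_X, Polynomial.eval_C] at hroot
    rcases mul_eq_zero.mp hroot with h | h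
    · exact absurd h (pow_ne_zero _ (by intro hz; linarith [sub_eq_zero.mp hz]))
    · exact h
  have heval1 : (1 : ℝ) ≤ |qR.eval 1| := by
    have : qR.eval 1 = ((q.eval 1 : ℤ) : ℝ) := by
      rw [hqR, Polynomial.eval_one_map]
      simp
    rw [this]
    rw [← Int.cast_abs]
    exact_mod_cast Int.one_le_abs h1q
  -- coefficient bound for q, real version
  set cq : ℝ := ((D : ℝ) + 1) ^ D * (c : ℝ) with hcq
  have hc0 : (0:ℤ) ≤ c := hb.nonneg
  have hqcoeff : ∀ k, |qR.coeff k| ≤ cq := by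
    intro k
    rw [hqR, Polynomial.coeff_map]
    have h2 : |q.coeff k| ≤ ((D : ℤ) + 1) ^ t * c := hbq.2 k
    have h3 : ((D : ℤ) + 1) ^ t * c ≤ ((D : ℤ) + 1) ^ D * c := by
      apply mul_le_mul_of_nonneg_right _ hc0
      exact pow_le_pow_right₀ (by omega) htD
    have : |((q.coeff k : ℤ) : ℝ)| ≤ ((((D : ℤ) + 1) ^ D * c : ℤ) : ℝ) := by
      rw [← Int.cast_abs]
      exact_mod_cast h2.trans h3
    refine this.trans (le_of_eq ?_)
    push_cast
    ring
  -- evaluation as sums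
  have hdq : qR.natDegree < D + 1 := by
    have h5 := (Polynomial.natDegree_map_le (f := Int.castRingHom ℝ) (p := q)).trans hbq.1
    rw [← hqR] at h5
    omega
  have hsum1 : qR.eval 1 = ∑ i ∈ Finset.range (D + 1), qR.coeff i * 1 ^ i :=
    Polynomial.eval_eq_sum_range' hdq 1
  have hsumγ : qR.eval γ = ∑ i ∈ Finset.range (D + 1), qR.coeff i * γ ^ i :=
    Polynomial.eval_eq_sum_range' hdq γ
  have hdiff : qR.eval 1 = ∑ i ∈ Finset.range (D + 1), qR.coeff i * (1 - γ ^ i) := by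
    have : qR.eval 1 = qR.eval 1 - qR.eval γ := by rw [hrootq]; ring
    rw [this, hsum1, hsumγ, ← Finset.sum_sub_distrib]
    apply Finset.sum_congr rfl
    intro i _
    ring
  -- Bernoulli-type bound
  have hbern : ∀ i : ℕ, 1 - γ ^ i ≤ i * (1 - γ) := by
    intro i
    have := one_add_mul_le_pow (a := γ - 1) (by linarith) i
    have h2 : 1 + (i : ℝ) * (γ - 1) ≤ γ ^ i := by
      calc 1 + (i : ℝ) * (γ - 1) ≤ (1 + (γ - 1)) ^ i := this
        _ = γ ^ i := by ring_nf
    linarith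
  have hγpow : ∀ i : ℕ, γ ^ i ≤ 1 := fun i => pow_le_one₀ h0 h1.le
  have hcq0 : 0 ≤ cq := by positivity
  calc (1:ℝ) ≤ |qR.eval 1| := heval1
    _ = |∑ i ∈ Finset.range (D + 1), qR.coeff i * (1 - γ ^ i)| := by rw [hdiff]
    _ ≤ ∑ i ∈ Finset.range (D + 1), |qR.coeff i * (1 - γ ^ i)| := Finset.abs_sum_le_sum_abs _ _
    _ ≤ ∑ i ∈ Finset.range (D + 1), cq * ((i : ℝ) * (1 - γ)) := by
        apply Finset.sum_le_sum
        intro i _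
        rw [abs_mul]
        apply mul_le_mul (hqcoeff i) _ (abs_nonneg _) hcq0
        rw [abs_of_nonneg (by linarith [hγpow i])]
        exact hbern i
    _ = cq * (1 - γ) * ∑ i ∈ Finset.range (D + 1), (i : ℝ) := by
        rw [Finset.mul_sum]
        apply Finset.sum_congr rfl
        intro i _
        ring
    _ = ((D : ℝ) * ((D : ℝ) + 1) / 2) * (((D : ℝ) + 1) ^ D * (c : ℝ)) * (1 - γ) := by
        have : ∑ i ∈ Finset.range (D + 1), (i : ℝ) = (D : ℝ) * ((D : ℝ) + 1) / 2 := by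
          have hnat := Finset.sum_range_id_mul_two (D + 1)
          have : ((∑ i ∈ Finset.range (D + 1), i) * 2 : ℕ) = ((D + 1) * D : ℕ) := by
            rw [hnat]; simp
          have hcast : ((∑ i ∈ Finset.range (D + 1), i : ℕ) : ℝ) * 2 = ((D:ℝ) + 1) * D := by
            exact_mod_cast congrArg (Nat.cast : ℕ → ℝ) this
          push_cast at hcast ⊢
          linarith
        rw [this, hcq]
        ring


lemma det_one_sub_smul_ne_zero (Q : Matrix S S ℝ) (γ : ℝ) (h0 : 0 ≤ γ) (h1 : γ < 1)
    (hQ0 : ∀ i j, 0 ≤ Q i j) (hQ1 : ∀ i, ∑ j, Q i j = 1) :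
    ((1 : Matrix S S ℝ) - γ • Q).det ≠ 0 := by
  intro hdet
  obtain ⟨v, hv, hMv⟩ := Matrix.exists_mulVec_eq_zero_iff.mpr hdet
  rcases isEmpty_or_nonempty S with hS | hS
  · exact hv (funext fun i => (IsEmpty.false i).elim)
  obtain ⟨s₀, -, hs₀⟩ := Finset.exists_max_image Finset.univ (fun i => |v i|) ⟨Classical.arbitrary S, Finset.mem_univ _⟩
  have happ := congrFun hMv s₀
  have hexp : v s₀ - γ * ∑ j, Q s₀ j * v j = 0 := by
    have : ((1 : Matrix S S ℝ) - γ • Q) *ᵥ v = (1 : Matrix S S ℝ) *ᵥ v - (γ • Q) *ᵥ v := by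
      rw [Matrix.sub_mulVec]
    rw [this] at happ
    simpa [Matrix.one_mulVec, Matrix.smul_mulVec, Matrix.mulVec, dotProduct,
      Finset.mul_sum] using happ
  have hle : |v s₀| ≤ γ * |v s₀| := by
    have h2 : v s₀ = γ * ∑ j, Q s₀ j * v j := by linarith
    calc |v s₀| = γ * |∑ j, Q s₀ j * v j| := by rw [h2, abs_mul, abs_of_nonneg h0]
      _ ≤ γ * ∑ j, |Q s₀ j * v j| :=
          mul_le_mul_of_nonneg_left (Finset.abs_sum_le_sum_abs _ _) h0
      _ ≤ γ * ∑ j, Q s₀ j * |v s₀| := by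
          apply mul_le_mul_of_nonneg_left _ h0
          apply Finset.sum_le_sum
          intro j _
          rw [abs_mul, abs_of_nonneg (hQ0 s₀ j)]
          exact mul_le_mul_of_nonneg_left (hs₀ j (Finset.mem_univ _)) (hQ0 s₀ j)
      _ = γ * |v s₀| := by rw [← Finset.sum_mul, hQ1 s₀, one_mul]
  have hz : |v s₀| ≤ 0 := by nlinarith [abs_nonneg (v s₀)]
  apply hv
  funext i
  have := hs₀ i (Finset.mem_univ _)
  have : |v i| ≤ 0 := le_trans this hz
  simpa using le_antisymm this (abs_nonneg _)


lemma natA2 (n : ℕ) (hn : 1 ≤ n) : n ^ 3 * n ^ n * 4 ^ (2 * n - 1) ≤ 4 ^ (n * (2 * n - 1)) := by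
  have key : n ^ 3 * n ^ n ≤ 4 ^ ((n - 1) * (2 * n - 1)) := by
    rcases Nat.lt_or_ge n 3 with h3 | h3
    · interval_cases n <;> norm_num
    · have hle : n ≤ 2 ^ n := Nat.le_of_lt Nat.lt_two_pow_self
      calc n ^ 3 * n ^ n ≤ (2 ^ n) ^ 3 * (2 ^ n) ^ n :=
            Nat.mul_le_mul (Nat.pow_le_pow_left hle 3) (Nat.pow_le_pow_left hle n)
        _ = 2 ^ (n * 3 + n * n) := by rw [← pow_mul, ← pow_mul, ← pow_add]
        _ ≤ 2 ^ (2 * ((n - 1) * (2 * n - 1))) := by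
            apply Nat.pow_le_pow_right (by norm_num)
            zify [show 1 ≤ 2 * n by omega, show 1 ≤ n by omega]
            have h3' : (3 : ℤ) ≤ (n : ℤ) := by exact_mod_cast h3
            nlinarith [h3']
        _ = 4 ^ ((n - 1) * (2 * n - 1)) := by rw [pow_mul]; norm_num
  calc n ^ 3 * n ^ n * 4 ^ (2 * n - 1) ≤ 4 ^ ((n - 1) * (2 * n - 1)) * 4 ^ (2 * n - 1) :=
        Nat.mul_le_mul_right _ key
    _ = 4 ^ ((n - 1) * (2 * n - 1) + (2 * n - 1)) := by rw [← pow_add]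
    _ = 4 ^ (n * (2 * n - 1)) := by
        congr 1
        zify [show 1 ≤ 2 * n by omega, show 1 ≤ n by omega]
        ring

lemma natA1 (n : ℕ) (hn : 1 ≤ n) : (n.factorial) ^ 2 ≤ (2 * n - 1) ^ n * n ^ n := by
  have h1 : n.factorial ≤ n ^ n := Nat.factorial_le_pow n
  calc (n.factorial) ^ 2 = n.factorial * n.factorial := sq n.factorial
    _ ≤ n ^ n * n ^ n := Nat.mul_le_mul h1 h1
    _ ≤ (2 * n - 1) ^ n * n ^ n :=
        Nat.mul_le_mul_right _ (Nat.pow_le_pow_left (by omega) n)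

lemma natkey (n m rinf : ℕ) (hn : 1 ≤ n) (hm : 1 ≤ m) (hrinf : 1 ≤ rinf) :
    (2 * n - 1) * n * ((2 * n) ^ (2 * n - 1) *
        (2 * n ^ 2 * rinf * (n.factorial) ^ 2 * (4 * m) ^ (2 * n - 1)))
      ≤ 2 * (2 * n - 1) ^ (n + 1) * (2 * n * rinf * m ^ (2 * n) * 4 ^ n) ^ (2 * n - 1) := by
  set N' := 2 * n - 1 with hN'
  have hcore : (2 * n - 1) * (n ^ 2 * n) * (n.factorial) ^ 2 * 4 ^ N' * m ^ N' * rinf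
      ≤ (2 * n - 1) ^ (n + 1) * (rinf ^ N' * ((m ^ (2 * n)) ^ N' * (4 ^ n) ^ N')) := by
    have c1 : rinf ≤ rinf ^ N' := Nat.le_self_pow (by omega) rinf
    have c2 : m ^ N' ≤ (m ^ (2 * n)) ^ N' := by
      rw [← pow_mul]
      exact Nat.pow_le_pow_right hm (by nlinarith)
    have c3 : (2 * n - 1) * (n ^ 2 * n) * (n.factorial) ^ 2 * 4 ^ N'
        ≤ (2 * n - 1) ^ (n + 1) * (4 ^ n) ^ N' := by
      calc (2 * n - 1) * (n ^ 2 * n) * (n.factorial) ^ 2 * 4 ^ N'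
          ≤ (2 * n - 1) * (n ^ 2 * n) * ((2 * n - 1) ^ n * n ^ n) * 4 ^ N' :=
            Nat.mul_le_mul_right _ (Nat.mul_le_mul_left _ (natA1 n hn))
        _ = (2 * n - 1) ^ (n + 1) * (n ^ 3 * n ^ n * 4 ^ N') := by ring
        _ ≤ (2 * n - 1) ^ (n + 1) * 4 ^ (n * N') :=
            Nat.mul_le_mul_left _ (natA2 n hn)
        _ = (2 * n - 1) ^ (n + 1) * (4 ^ n) ^ N' := by rw [← pow_mul]
    calc (2 * n - 1) * (n ^ 2 * n) * (n.factorial) ^ 2 * 4 ^ N' * m ^ N' * rinf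
        ≤ ((2 * n - 1) ^ (n + 1) * (4 ^ n) ^ N') * (m ^ (2 * n)) ^ N' * rinf ^ N' :=
          Nat.mul_le_mul (Nat.mul_le_mul c3 c2) c1
      _ = (2 * n - 1) ^ (n + 1) * (rinf ^ N' * ((m ^ (2 * n)) ^ N' * (4 ^ n) ^ N')) := by ring
  calc (2 * n - 1) * n * ((2 * n) ^ N' *
          (2 * n ^ 2 * rinf * (n.factorial) ^ 2 * (4 * m) ^ N'))
      = 2 * (2 * n) ^ N' *
          ((2 * n - 1) * (n ^ 2 * n) * (n.factorial) ^ 2 * 4 ^ N' * m ^ N' * rinf) := by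
        rw [mul_pow 4 m N']; ring
    _ ≤ 2 * (2 * n) ^ N' *
          ((2 * n - 1) ^ (n + 1) * (rinf ^ N' * ((m ^ (2 * n)) ^ N' * (4 ^ n) ^ N'))) :=
        Nat.mul_le_mul_left _ hcore
    _ = 2 * (2 * n - 1) ^ (n + 1) * (2 * n * rinf * m ^ (2 * n) * 4 ^ n) ^ N' := by
        rw [mul_pow, mul_pow, mul_pow]; ring


/-- the polynomial matrix m•1 - X•K -/
noncomputable def MpM (m : ℕ) (K : S → S → ℤ) : Matrix S S (Polynomial ℤ) :=
  Matrix.of fun a b => C (if a = b then (m : ℤ) else 0) - C (K a b) * X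

lemma bnd_X : Bnd (X : Polynomial ℤ) 1 1 := by
  refine ⟨le_of_eq Polynomial.natDegree_X, fun k => ?_⟩
  rw [Polynomial.coeff_X]
  split <;> simp

lemma bnd_MpM_entry (m : ℕ) (K : S → S → ℤ) (hK : ∀ a b, |K a b| ≤ m) (a b : S) :
    Bnd (MpM m K a b) 1 ((m : ℤ) + m) := by
  have h1 : Bnd (C (if a = b then (m : ℤ) else 0)) 0 m := by
    apply bnd_C
    split <;> simp
  have h2 : Bnd (C (K a b) * X) (0 + 1) ((0 + 1) * ((m : ℤ) * 1)) :=
    bnd_mul (bnd_C _ _ (hK a b)) bnd_X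
  have := bnd_sub (bnd_mono h1 (by omega) le_rfl)
    (bnd_mono h2 le_rfl (le_of_eq (by ring)))
  exact this

lemma bnd_MpM_det (m : ℕ) (hm : 1 ≤ m) (K : S → S → ℤ) (hK : ∀ a b, |K a b| ≤ m) :
    Bnd (MpM m K).det (Fintype.card S)
      ((Fintype.card S).factorial * (2 * ((m : ℤ) + m)) ^ Fintype.card S) :=
  bnd_det _ _ (by positivity) (fun a b => bnd_MpM_entry m K hK a b)

lemma bnd_MpM_adj (m : ℕ) (hm : 1 ≤ m) (K : S → S → ℤ) (hK : ∀ a b, |K a b| ≤ m) (i j : S) :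
    Bnd ((MpM m K).adjugate i j) (Fintype.card S - 1)
      ((Fintype.card S).factorial * (2 * ((m : ℤ) + m)) ^ (Fintype.card S - 1)) := by
  rw [Matrix.adjugate_apply]
  apply bnd_det_row_const _ j _ (by positivity)
  · intro a b ha
    rw [Matrix.updateRow_ne ha]
    exact bnd_MpM_entry m K hK a b
  · intro b
    rw [Matrix.updateRow_self]
    rw [Pi.single_apply]
    split
    · exact bnd_one
    · exact bnd_zero 1 (by norm_num) 0

/-- the numerator-vector entry -/
noncomputable def ApP (m : ℕ) (K : S → S → ℤ) (qv : S → ℤ) (s : S) : Polynomial ℤ :=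
  ((MpM m K).adjugate *ᵥ fun b => C (qv b)) s

lemma bnd_ApP (m : ℕ) (hm : 1 ≤ m) (K : S → S → ℤ) (hK : ∀ a b, |K a b| ≤ m)
    (rinf : ℕ) (qv : S → ℤ) (hqv : ∀ b, |qv b| ≤ rinf) (s : S) :
    Bnd (ApP m K qv s) (Fintype.card S - 1)
      (Fintype.card S * ((rinf : ℤ) *
        ((Fintype.card S).factorial * (2 * ((m : ℤ) + m)) ^ (Fintype.card S - 1)))) := by
  have hrw : ApP m K qv s = ∑ b, C (qv b) * (MpM m K).adjugate s b := by
    unfold ApP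
    simp only [Matrix.mulVec, dotProduct]
    exact Finset.sum_congr rfl (fun b _ => mul_comm _ _)
  rw [hrw]
  have := bnd_sum Finset.univ (fun b => C (qv b) * (MpM m K).adjugate s b)
    (Fintype.card S - 1)
    ((rinf : ℤ) * ((Fintype.card S).factorial * (2 * ((m : ℤ) + m)) ^ (Fintype.card S - 1)))
    (by positivity)
    (fun b _ => by
      have h2 := bnd_mul (bnd_C (qv b) _ (hqv b)) (bnd_MpM_adj m hm K hK s b)
      exact bnd_mono h2 (by omega) (le_of_eq (by ring)))
  rw [Finset.card_univ] at this
  exact_mod_cast this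

/-- the evaluation ring hom ℤ[X] → ℝ at γ -/
noncomputable def evR (γ : ℝ) : Polynomial ℤ →+* ℝ :=
  (Polynomial.evalRingHom γ).comp (Polynomial.mapRingHom (Int.castRingHom ℝ))

lemma evR_apply (γ : ℝ) (p : Polynomial ℤ) :
    evR γ p = Polynomial.eval γ (p.map (Int.castRingHom ℝ)) := rfl

lemma evR_C (γ : ℝ) (a : ℤ) : evR γ (C a) = (a : ℝ) := by simp [evR_apply]

lemma map_MpM (γ : ℝ) (m : ℕ) (hm : 1 ≤ m) (K : S → S → ℤ) (Q : Matrix S S ℝ)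
    (hQ : ∀ a b, Q a b = (K a b : ℝ) / m) :
    (MpM m K).map (evR γ) = (m : ℝ) • ((1 : Matrix S S ℝ) - γ • Q) := by
  have hm0 : (m : ℝ) ≠ 0 := by positivity
  ext a b
  simp only [Matrix.map_apply, MpM, Matrix.of_apply, Matrix.smul_apply, Matrix.sub_apply,
    Matrix.one_apply, smul_eq_mul]
  rw [map_sub, _root_.map_mul, evR_C, evR_C]
  have : evR γ X = γ := by simp [evR_apply]
  rw [this, hQ a b]
  split
  · field_simp; push_cast; ring
  · field_simp; ring

/-- the evaluation of det and the value function -/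
lemma bridge [Nonempty S] (γ : ℝ) (m : ℕ) (hm : 1 ≤ m) (K : S → S → ℤ) (Q : Matrix S S ℝ)
    (hQ : ∀ a b, Q a b = (K a b : ℝ) / m)
    (qv : S → ℤ) (w : S → ℝ) (hw : ∀ b, w b = (qv b : ℝ) / m)
    (hdet : ((1 : Matrix S S ℝ) - γ • Q).det ≠ 0) (s : S) :
    evR γ (MpM m K).det ≠ 0 ∧
    evR γ (MpM m K).det * ((((1 : Matrix S S ℝ) - γ • Q)⁻¹ *ᵥ w) s)
      = evR γ (ApP m K qv s) := by
  have hm0 : (m : ℝ) ≠ 0 := by positivity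
  set M : Matrix S S ℝ := (1 : Matrix S S ℝ) - γ • Q with hM
  have hdetval : evR γ (MpM m K).det = (m : ℝ) ^ Fintype.card S * M.det := by
    rw [RingHom.map_det, RingHom.mapMatrix_apply, map_MpM γ m hm K Q hQ, Matrix.det_smul]
  have hadj : ∀ b, evR γ ((MpM m K).adjugate s b)
      = (m : ℝ) ^ (Fintype.card S - 1) * M.adjugate s b := by
    intro b
    have h1 := (evR γ).map_adjugate (MpM m K)
    have h3 : ((MpM m K).adjugate.map (evR γ)) s b = (((MpM m K).map (evR γ)).adjugate) s b := by
      rw [← RingHom.mapMatrix_apply, h1, RingHom.mapMatrix_apply]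
    rw [Matrix.map_apply] at h3
    rw [h3, map_MpM γ m hm K Q hQ, Matrix.adjugate_smul, Matrix.smul_apply, smul_eq_mul]
  constructor
  · rw [hdetval]
    exact mul_ne_zero (by positivity) hdet
  · have hAp : evR γ (ApP m K qv s)
        = (m : ℝ) ^ Fintype.card S * ((M.adjugate *ᵥ w) s) := by
      unfold ApP
      simp only [Matrix.mulVec, dotProduct]
      rw [map_sum]
      have hqw : ∀ b, ((qv b : ℤ) : ℝ) = (m : ℝ) * w b := by
        intro b
        rw [hw b]
        field_simp
      have hcard : Fintype.card S - 1 + 1 = Fintype.card S :=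
        Nat.succ_pred_eq_of_pos Fintype.card_pos
      rw [Finset.mul_sum]
      apply Finset.sum_congr rfl
      intro b _
      have hpow : (m:ℝ) ^ Fintype.card S = (m:ℝ) ^ (Fintype.card S - 1) * m := by
        rw [← pow_succ, hcard]
      rw [_root_.map_mul, evR_C, hadj b, hqw b, hpow]
      ring
    rw [hAp, hdetval]
    have hinv : (M⁻¹ *ᵥ w) s = M.det⁻¹ * ((M.adjugate *ᵥ w) s) := by
      rw [Matrix.inv_def, Ring.inverse_eq_inv, Matrix.smul_mulVec]
      simp [smul_eq_mul]
    rw [hinv]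
    field_simp


end CPaux

open CPaux in
/-- Under Assumption R, if `γ ↦ v^π_{γ,s} - v^{π'}_{γ,s}` is not identically zero on
`[0,1)`, then every `γ̂ ∈ [0,1)` with `v^π_{γ̂,s} = v^{π'}_{γ̂,s}` satisfies
`γ̂ < 1 - η(M)`, where `N = 2|S| - 1`, `L = 2 |S| r∞ m^{2|S|} 4^{|S|}` and
`η(M) = 1 / (2 N^{N/2+2} (L+1)^N)`. -/
theorem crossing_points_lt_one_sub_eta {S A : Type*} [Fintype S] [DecidableEq S]
    [Nonempty S] [Fintype A] [Nonempty A]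
    (r : S → A → ℝ) (P : S → A → S → ℝ) (m rinf : ℕ) (hm : 1 ≤ m)
    (hP : ∀ s a s', ∃ k : ℕ, k ≤ m ∧ P s a s' = (k : ℝ) / m)
    (hP0 : ∀ s a s', 0 ≤ P s a s') (hP1 : ∀ s a, ∑ s', P s a s' = 1)
    (hr : ∀ s a, ∃ q : ℤ, r s a = (q : ℝ) / m ∧ |q| ≤ (rinf : ℤ))
    (π π' : S → A) (s : S)
    (hnotzero : ¬ ∀ γ : ℝ, 0 ≤ γ → γ < 1 → valueFn r P π γ s = valueFn r P π' γ s)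
    (N : ℕ) (hNdef : N = 2 * Fintype.card S - 1)
    (L : ℝ)
    (hLdef : L = 2 * Fintype.card S * rinf *
      (m : ℝ) ^ (2 * Fintype.card S) * 4 ^ Fintype.card S)
    (η : ℝ) (hηdef : η = 1 / (2 * (N : ℝ) ^ ((N : ℝ) / 2 + 2) * (L + 1) ^ N)) :
    ∀ γhat : ℝ, 0 ≤ γhat → γhat < 1 →
      valueFn r P π γhat s = valueFn r P π' γhat s → γhat < 1 - η := by
  classical
  intro γhat hγ0 hγ1 heq
  set n := Fintype.card S with hncard
  have hn : 1 ≤ n := Fintype.card_pos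
  -- dispose of the trivial case rinf = 0
  rcases Nat.eq_zero_or_pos rinf with hr0 | hrpos
  · exfalso
    apply hnotzero
    intro γ _ _
    have hzero : ∀ ρ : S → A, policyReward r ρ = 0 := by
      intro ρ
      funext b
      obtain ⟨q, hq1, hq2⟩ := hr b (ρ b)
      have hq0 : q = 0 := by
        rw [hr0] at hq2
        simpa using (abs_nonneg q).antisymm' (by exact_mod_cast hq2)
      simp [policyReward, hq1, hq0]
    unfold valueFn
    rw [hzero π, hzero π', Matrix.mulVec_zero, Matrix.mulVec_zero]
  -- choices for the two policies
  have hPπ : ∀ a b, ∃ k : ℕ, k ≤ m ∧ P a (π a) b = (k : ℝ) / m := fun a b => hP a (π a) b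
  have hPπ' : ∀ a b, ∃ k : ℕ, k ≤ m ∧ P a (π' a) b = (k : ℝ) / m := fun a b => hP a (π' a) b
  choose K1n hK1le hK1eq using hPπ
  choose K2n hK2le hK2eq using hPπ'
  set K1 : S → S → ℤ := fun a b => (K1n a b : ℤ) with hK1
  set K2 : S → S → ℤ := fun a b => (K2n a b : ℤ) with hK2
  have hK1abs : ∀ a b, |K1 a b| ≤ m := fun a b => by
    rw [hK1]; simp only [abs_of_nonneg (Int.natCast_nonneg _)]; exact_mod_cast hK1le a b
  have hK2abs : ∀ a b, |K2 a b| ≤ m := fun a b => by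
    rw [hK2]; simp only [abs_of_nonneg (Int.natCast_nonneg _)]; exact_mod_cast hK2le a b
  choose qv1 hqv1eq hqv1le using fun b => hr b (π b)
  choose qv2 hqv2eq hqv2le using fun b => hr b (π' b)
  set Q1 := policyMatrix P π with hQ1'
  set Q2 := policyMatrix P π' with hQ2'
  have hQ1 : ∀ a b, Q1 a b = (K1 a b : ℝ) / m := fun a b => by
    show P a (π a) b = ((K1n a b : ℤ) : ℝ) / m
    rw [hK1eq a b]; norm_num
  have hQ2 : ∀ a b, Q2 a b = (K2 a b : ℝ) / m := fun a b => by
    show P a (π' a) b = ((K2n a b : ℤ) : ℝ) / m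
    rw [hK2eq a b]; norm_num
  have hw1 : ∀ b, policyReward r π b = (qv1 b : ℝ) / m := fun b => hqv1eq b
  have hw2 : ∀ b, policyReward r π' b = (qv2 b : ℝ) / m := fun b => hqv2eq b
  have hQ10 : ∀ i j, 0 ≤ Q1 i j := fun i j => hP0 i (π i) j
  have hQ20 : ∀ i j, 0 ≤ Q2 i j := fun i j => hP0 i (π' i) j
  have hQ11 : ∀ i, ∑ j, Q1 i j = 1 := fun i => hP1 i (π i)
  have hQ21 : ∀ i, ∑ j, Q2 i j = 1 := fun i => hP1 i (π' i)
  -- the key polynomial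
  set g : Polynomial ℤ := ApP m K1 qv1 s * (MpM m K2).det - ApP m K2 qv2 s * (MpM m K1).det
    with hg
  -- evaluation identity
  have key : ∀ γ : ℝ, 0 ≤ γ → γ < 1 →
      evR γ (MpM m K1).det ≠ 0 ∧ evR γ (MpM m K2).det ≠ 0 ∧
      evR γ g = evR γ (MpM m K1).det * evR γ (MpM m K2).det *
        (valueFn r P π γ s - valueFn r P π' γ s) := by
    intro γ h0 h1
    have hdet1 := det_one_sub_smul_ne_zero Q1 γ h0 h1 hQ10 hQ11
    have hdet2 := det_one_sub_smul_ne_zero Q2 γ h0 h1 hQ20 hQ21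
    obtain ⟨hne1, hb1⟩ := bridge γ m hm K1 Q1 hQ1 qv1 (policyReward r π) hw1 hdet1 s
    obtain ⟨hne2, hb2⟩ := bridge γ m hm K2 Q2 hQ2 qv2 (policyReward r π') hw2 hdet2 s
    refine ⟨hne1, hne2, ?_⟩
    have hv1 : valueFn r P π γ s = (((1 : Matrix S S ℝ) - γ • Q1)⁻¹ *ᵥ policyReward r π) s := rfl
    have hv2 : valueFn r P π' γ s = (((1 : Matrix S S ℝ) - γ • Q2)⁻¹ *ᵥ policyReward r π') s := rfl
    rw [hg, map_sub, _root_.map_mul, _root_.map_mul, ← hb1, ← hb2, hv1, hv2]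
    ring
  -- g is nonzero
  have hgne : g ≠ 0 := by
    intro hg0
    apply hnotzero
    intro γ h0 h1
    obtain ⟨hne1, hne2, hkey⟩ := key γ h0 h1
    rw [hg0, map_zero] at hkey
    have := (mul_eq_zero.mp hkey.symm).resolve_left
      (mul_ne_zero hne1 hne2)
    linarith [sub_eq_zero.mp this]
  -- γhat is a root
  have hroot : Polynomial.eval γhat (g.map (Int.castRingHom ℝ)) = 0 := by
    obtain ⟨hne1, hne2, hkey⟩ := key γhat hγ0 hγ1
    rw [← evR_apply, hkey, heq]
    ring
  -- coefficient bound for g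
  set cAN : ℕ := n * (rinf * (n.factorial * (4 * m) ^ (n - 1))) with hcAN
  set cdN : ℕ := n.factorial * (4 * m) ^ n with hcdN
  set cgN : ℕ := 2 * n ^ 2 * rinf * (n.factorial) ^ 2 * (4 * m) ^ (2 * n - 1) with hcgN
  have hbA1 : Bnd (ApP m K1 qv1 s) (n - 1) ((cAN : ℕ) : ℤ) := by
    refine bnd_mono (bnd_ApP m hm K1 hK1abs rinf qv1 hqv1le s) le_rfl (le_of_eq ?_)
    rw [hcAN]; push_cast; ring
  have hbA2 : Bnd (ApP m K2 qv2 s) (n - 1) ((cAN : ℕ) : ℤ) := by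
    refine bnd_mono (bnd_ApP m hm K2 hK2abs rinf qv2 hqv2le s) le_rfl (le_of_eq ?_)
    rw [hcAN]; push_cast; ring
  have hbd1 : Bnd (MpM m K1).det n ((cdN : ℕ) : ℤ) := by
    refine bnd_mono (bnd_MpM_det m hm K1 hK1abs) le_rfl (le_of_eq ?_)
    rw [hcdN]; push_cast; ring
  have hbd2 : Bnd (MpM m K2).det n ((cdN : ℕ) : ℤ) := by
    refine bnd_mono (bnd_MpM_det m hm K2 hK2abs) le_rfl (le_of_eq ?_)
    rw [hcdN]; push_cast; ring
  have hbnd : Bnd g N (cgN : ℤ) := by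
    have h3 := bnd_sub (bnd_mul hbA1 hbd2) (bnd_mul hbA2 hbd1)
    rw [← hg] at h3
    refine bnd_mono h3 (by rw [hNdef]; omega) ?_
    apply le_of_eq
    have hnn : ((n - 1 : ℕ) : ℤ) + 1 = (n : ℤ) := by omega
    rw [hnn, hcAN, hcdN, hcgN, show 2 * n - 1 = (n - 1) + n from by omega]
    push_cast
    ring
  -- apply the gap lemma
  have hgap := gap hgne hbnd hγ0 hγ1 hroot
  set SB : ℝ := ((N : ℝ) * ((N : ℝ) + 1) / 2) * (((N : ℝ) + 1) ^ N * ((cgN : ℤ) : ℝ)) with hSB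
  -- positivity facts
  have hN1 : 1 ≤ N := by rw [hNdef]; omega
  have hNR1 : (1 : ℝ) ≤ (N : ℝ) := by exact_mod_cast hN1
  have hNpos : (0 : ℝ) < (N : ℝ) := by linarith
  have hcgN1 : 1 ≤ cgN := by
    rw [hcgN]
    exact Nat.mul_pos (Nat.mul_pos (Nat.mul_pos (Nat.mul_pos (by omega)
      (pow_pos (by omega) 2)) hrpos) (pow_pos (Nat.factorial_pos n) 2))
      (pow_pos (by omega) _)
  have hcgR : (1 : ℝ) ≤ ((cgN : ℤ) : ℝ) := by exact_mod_cast hcgN1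
  have hSBpos : 0 < SB := by
    rw [hSB]
    exact mul_pos (div_pos (mul_pos hNpos (by linarith)) two_pos)
      (mul_pos (pow_pos (by linarith) N) (by linarith))
  have hL0 : 0 ≤ L := by rw [hLdef]; positivity
  have hLNL : ((2 * n * rinf * m ^ (2 * n) * 4 ^ n : ℕ) : ℝ) = L := by
    rw [hLdef]; push_cast; ring
  have hZ : SB < 2 * (N : ℝ) ^ ((N : ℝ) / 2 + 2) * (L + 1) ^ N := by
    have e1 : SB = (((2 * n - 1) * n * ((2 * n) ^ (2 * n - 1) * cgN) : ℕ) : ℝ) := by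
      have eC : ((2 * n - 1 : ℕ) : ℝ) + 1 = ((2 * n : ℕ) : ℝ) := by
        norm_cast; omega
      rw [hSB, hNdef, eC]
      push_cast
      ring
    have e2 : ((2 * (2 * n - 1) ^ (n + 1) * (2 * n * rinf * m ^ (2 * n) * 4 ^ n) ^ (2 * n - 1) : ℕ) : ℝ)
        = 2 * ((2 * n - 1 : ℕ) : ℝ) ^ (n + 1) * L ^ (2 * n - 1) := by
      rw [← hLNL]; push_cast; ring
    have h12 : SB ≤ 2 * ((2 * n - 1 : ℕ) : ℝ) ^ (n + 1) * L ^ (2 * n - 1) := by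
      rw [e1, ← e2]
      exact_mod_cast natkey n m rinf hn hm hrpos
    have hbase1 : (1 : ℝ) ≤ ((2 * n - 1 : ℕ) : ℝ) := by
      exact_mod_cast (show 1 ≤ 2 * n - 1 by omega)
    have h34 : 2 * ((2 * n - 1 : ℕ) : ℝ) ^ (n + 1) * L ^ (2 * n - 1)
        < 2 * ((2 * n - 1 : ℕ) : ℝ) ^ (n + 1) * (L + 1) ^ (2 * n - 1) := by
      apply mul_lt_mul_of_pos_left
        (pow_lt_pow_left₀ (by linarith) hL0 (by omega))
        (mul_pos two_pos (pow_pos (by linarith) _))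
    have h5 : 2 * ((2 * n - 1 : ℕ) : ℝ) ^ (n + 1) * (L + 1) ^ (2 * n - 1)
        ≤ 2 * (N : ℝ) ^ ((N : ℝ) / 2 + 2) * (L + 1) ^ N := by
      rw [show (2 * n - 1) = N from hNdef.symm]
      apply mul_le_mul_of_nonneg_right _ (pow_nonneg (by linarith) N)
      apply mul_le_mul_of_nonneg_left _ (by norm_num)
      calc (N : ℝ) ^ (n + 1) = (N : ℝ) ^ ((n + 1 : ℕ) : ℝ) := (Real.rpow_natCast _ _).symm
        _ ≤ (N : ℝ) ^ ((N : ℝ) / 2 + 2) := by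
            apply Real.rpow_le_rpow_of_exponent_le hNR1
            have hNcast : (N : ℝ) = 2 * (n : ℝ) - 1 := by
              rw [hNdef, Nat.cast_sub (by omega : 1 ≤ 2 * n)]; push_cast; ring
            push_cast
            rw [hNcast]
            linarith
    linarith
  have hXpos : 0 < 2 * (N : ℝ) ^ ((N : ℝ) / 2 + 2) * (L + 1) ^ N :=
    mul_pos (mul_pos two_pos (Real.rpow_pos_of_pos hNpos _)) (pow_pos (by linarith) N)
  have hfrac : 1 / SB ≤ 1 - γhat := by
    rw [div_le_iff₀ hSBpos]
    linarith [hgap]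
  have hlt : η < 1 / SB := by
    rw [hηdef]
    exact one_div_lt_one_div_of_lt hSBpos hZ
  linarith

end CPproof
end
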